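/- arXiv:2505.06769 — 5 statements merged into one kernel-verified Lean document; each statement's English description precedes it below -/
import Mathlib

section
/- Let M be a Markov chain with k ≥ 1 levels in which every state can reach T along edges, with weight function w : T → [0,∞), reachability Bellman update L, and initial vectors v̲_0, v̄_0. Then for every integer t ≥ 1, every 0 ≤ i ≤ k, and every state s in level ℓ_i: (L^{k·t} v̄_0)(s) − (L^{k·t} v̲_0)(s) ≤ (1 − p_min^i)·(1 − p_min^k)^{t−1}·w_max, where w_max := max_{t ∈ T} w(t). -/
/-- A finite Markov chain: transition function `δ` (nonnegative, rows sum to 1)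
together with a set `T` of absorbing target states. There is an edge `s → s'`
iff `δ s s' > 0`. -/
structure MC (S : Type) [Fintype S] [DecidableEq S] where
  δ : S → S → ℝ
  T : Finset S
  nonneg : ∀ s s' : S, 0 ≤ δ s s'
  rowsum : ∀ s : S, ∑ s' : S, δ s s' = 1
  absorbing : ∀ t ∈ T, δ t t = 1

variable {S : Type} [Fintype S] [DecidableEq S]

/-- Edge relation of a Markov chain: `s → s'` iff `δ s s' > 0`. -/
def MC.edge (M : MC S) (a b : S) : Prop := 0 < M.δ a b

/-- `pathLen r n a b`: there is a path of length `n` from `a` to `b` along `r`. -/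
def pathLen (r : S → S → Prop) : ℕ → S → S → Prop
  | 0 => fun a b => a = b
  | n + 1 => fun a c => ∃ b, r a b ∧ pathLen r n b c

/-- `reaches r A s`: `s` can reach the set `A` along the relation `r`. -/
def reaches (r : S → S → Prop) (A : Set S) (s : S) : Prop :=
  ∃ n, ∃ a ∈ A, pathLen r n s a

/-- Length of a shortest path from `s` to the set `A` along `r`. -/
noncomputable def distTo (r : S → S → Prop) (A : Set S) (s : S) : ℕ :=
  sInf {n | ∃ a ∈ A, pathLen r n s a}

/-- Level `0`: the targets together with all states that cannot reach the targets. -/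
def MC.level0 (M : MC S) : Set S :=
  {s | s ∈ M.T ∨ ¬ reaches M.edge (M.T : Set S) s}

/-- The levels of a Markov chain: `ℓ_0` is `level0`, and for `i ≥ 1`, `ℓ_i` is the
set of states whose shortest edge-path distance to `ℓ_0` is exactly `i`. -/
noncomputable def MC.levelSet (M : MC S) : ℕ → Set S
  | 0 => M.level0
  | i + 1 => {s | distTo M.edge M.level0 s = i + 1}

/-- `M` has (exactly) `k` levels: `ℓ_k` is the last nonempty level. -/
def MC.hasLevels (M : MC S) (k : ℕ) : Prop :=
  (M.levelSet k).Nonempty ∧ ∀ i, k < i → M.levelSet i = ∅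

/-- One-step transition matrix of the Markov chain. -/
noncomputable def MC.P (M : MC S) : Matrix S S ℝ := Matrix.of M.δ

/-- Weighted reachability value `val(s) = E_s[w(X_{t*}) · 1{t* < ∞}]`, where `t*` is
the first hitting time of `T`. Since `T` is absorbing, this equals the supremum
(monotone limit) over `n` of `∑_{t ∈ T} (δⁿ)(s,t)·w(t)`. -/
noncomputable def MC.reachVal (M : MC S) (w : S → ℝ) (s : S) : ℝ :=
  ⨆ n : ℕ, ∑ t ∈ M.T, (M.P ^ n) s t * w t

/-- Stochastic shortest path value `val(s) = E_s[∑_{t=0}^{t*} w(X_t)]`, where `t*` is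
the first hitting time of `T`: the expected weight collected strictly before `T`
(states outside `T`, counted via the `n`-step distributions) plus the expected weight
of the first target state hit. -/
noncomputable def MC.sspVal (M : MC S) (w : S → ℝ) (s : S) : ℝ :=
  (∑' n : ℕ, ∑ s' ∈ Finset.univ.filter (fun x => x ∉ M.T), (M.P ^ n) s s' * w s')
    + M.reachVal w s

/-- Smallest positive transition probability of the Markov chain. -/
noncomputable def MC.pmin (M : MC S) : ℝ :=
  sInf {p : ℝ | 0 < p ∧ ∃ s s' : S, M.δ s s' = p}

/-- Reachability Bellman update. -/
noncomputable def MC.reachUpdate (M : MC S) (w : S → ℝ) (v : S → ℝ) : S → ℝ :=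
  fun s => if s ∈ M.T then w s else ∑ s' : S, M.δ s s' * v s'

/-- SSP Bellman update. -/
noncomputable def MC.sspUpdate (M : MC S) (w : S → ℝ) (v : S → ℝ) : S → ℝ :=
  fun s => if s ∈ M.T then w s else w s + ∑ s' : S, M.δ s s' * v s'

/-- The reduced Markov chain `M[s = ·]`: the state `s` is made absorbing (its row of
`δ` replaced by the point mass at `s`) and added to the target set. -/
def MC.reduce (M : MC S) (s : S) : MC S where
  δ := fun a b => if a = s then (if b = s then 1 else 0) else M.δ a b
  T := insert s M.T
  nonneg := by
    intro a b
    by_cases h : a = s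
    · by_cases h' : b = s <;> simp [h, h']
    · simpa [h] using M.nonneg a b
  rowsum := by
    intro a
    by_cases h : a = s
    · simp [h]
    · simpa [h] using M.rowsum a
  absorbing := by
    intro t ht
    rcases Finset.mem_insert.mp ht with h | h
    · simp [h]
    · by_cases h' : t = s
      · simp [h']
      · simpa [h'] using M.absorbing t h

/-- Probability, in `M`, of ever visiting the state `s` when starting from `a`,
i.e. `P_a(∃ t ≥ 0, X_t = s)` (computed as a reachability value after making `s`
absorbing, which does not change the dynamics before the first visit to `s`). -/
noncomputable def MC.hitProb (M : MC S) (a s : S) : ℝ :=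
  (M.reduce s).reachVal (fun b => if b = s then 1 else 0) a

/-- Probability of having reached `T` within `i` steps, `P_s(∃ t ≤ i, X_t ∈ T)`;
since `T` is absorbing this equals `∑_{t ∈ T} (δ^i)(s,t)`. -/
noncomputable def MC.hitBy (M : MC S) (s : S) (i : ℕ) : ℝ :=
  ∑ t ∈ M.T, (M.P ^ i) s t

/-- Miss probability: probability of not having reached `T` within `n` steps. -/
noncomputable def MC.miss (M : MC S) (n : ℕ) (s : S) : ℝ :=
  ∑ s' ∈ Finset.univ.filter (fun x => x ∉ M.T), (M.P ^ n) s s'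

lemma MC.delta_le_one (M : MC S) (s s' : S) : M.δ s s' ≤ 1 := by
  calc M.δ s s' ≤ ∑ b : S, M.δ s b :=
        Finset.single_le_sum (fun b _ => M.nonneg s b) (Finset.mem_univ s')
    _ = 1 := M.rowsum s

lemma MC.pmin_mem [Nonempty S] (M : MC S) :
    M.pmin ∈ {p : ℝ | 0 < p ∧ ∃ s s' : S, M.δ s s' = p} := by
  have hfin : {p : ℝ | 0 < p ∧ ∃ s s' : S, M.δ s s' = p}.Finite :=
    Set.Finite.subset (Set.finite_range (fun x : S × S => M.δ x.1 x.2))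
      (by rintro p ⟨_, s, s', h⟩; exact ⟨(s, s'), h⟩)
  have hne : {p : ℝ | 0 < p ∧ ∃ s s' : S, M.δ s s' = p}.Nonempty := by
    obtain ⟨s⟩ := (inferInstance : Nonempty S)
    obtain ⟨s', hs'⟩ : ∃ s' : S, 0 < M.δ s s' := by
      by_contra h
      push_neg at h
      have hall : ∀ s' : S, M.δ s s' = 0 := fun s' => le_antisymm (h s') (M.nonneg s s')
      have := M.rowsum s
      simp [hall] at this
    exact ⟨M.δ s s', hs', s, s', rfl⟩
  exact hne.csInf_mem hfin

lemma MC.pmin_pos [Nonempty S] (M : MC S) : 0 < M.pmin := M.pmin_mem.1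

lemma MC.pmin_le_one [Nonempty S] (M : MC S) : M.pmin ≤ 1 := by
  obtain ⟨_, s, s', h⟩ := M.pmin_mem
  exact h ▸ M.delta_le_one s s'

lemma MC.pmin_le [Nonempty S] (M : MC S) {s s' : S} (h : 0 < M.δ s s') :
    M.pmin ≤ M.δ s s' := by
  have hfin : {p : ℝ | 0 < p ∧ ∃ s s' : S, M.δ s s' = p}.Finite :=
    Set.Finite.subset (Set.finite_range (fun x : S × S => M.δ x.1 x.2))
      (by rintro p ⟨_, s, s', h⟩; exact ⟨(s, s'), h⟩)
  exact csInf_le hfin.bddBelow ⟨h, s, s', rfl⟩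

lemma MC.Pn_nonneg (M : MC S) : ∀ n (s s' : S), 0 ≤ (M.P ^ n) s s' := by
  intro n
  induction n with
  | zero => intro s s'; simp [Matrix.one_apply]; split <;> norm_num
  | succ n ih =>
    intro s s'
    rw [pow_succ, Matrix.mul_apply]
    exact Finset.sum_nonneg fun b _ => mul_nonneg (ih s b) (M.nonneg b s')

lemma MC.Pn_rowsum (M : MC S) : ∀ n (s : S), ∑ s' : S, (M.P ^ n) s s' = 1 := by
  intro n
  induction n with
  | zero => intro s; simp [Matrix.one_apply]
  | succ n ih =>
    intro s
    simp only [pow_succ, Matrix.mul_apply]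
    rw [Finset.sum_comm]
    have : ∀ b : S, ∑ s' : S, (M.P ^ n) s b * M.P b s' = (M.P ^ n) s b := by
      intro b
      rw [← Finset.mul_sum]
      have : ∑ s' : S, M.P b s' = 1 := M.rowsum b
      rw [this, mul_one]
    simp only [this]
    exact ih s

lemma MC.delta_T (M : MC S) {t : S} (ht : t ∈ M.T) (s' : S) :
    M.δ t s' = if s' = t then 1 else 0 := by
  by_cases h : s' = t
  · simp [h, M.absorbing t ht]
  · simp only [h, if_false]
    have h1 : ∑ b ∈ Finset.univ.erase t, M.δ t b = 0 := by
      have h2 := M.rowsum t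
      rw [← Finset.add_sum_erase _ _ (Finset.mem_univ t), M.absorbing t ht] at h2
      linarith
    exact (Finset.sum_eq_zero_iff_of_nonneg
      (fun b _ => M.nonneg t b)).mp h1 s' (Finset.mem_erase.mpr ⟨h, Finset.mem_univ s'⟩)

lemma MC.miss_zero (M : MC S) (s : S) :
    M.miss 0 s = if s ∈ M.T then 0 else 1 := by
  unfold MC.miss
  simp only [pow_zero, Matrix.one_apply]
  rw [Finset.sum_ite_eq]
  simp

lemma MC.miss_succ (M : MC S) (n : ℕ) (s : S) :
    M.miss (n + 1) s = ∑ b : S, M.δ s b * M.miss n b := by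
  unfold MC.miss
  simp only [pow_succ', Matrix.mul_apply]
  rw [Finset.sum_comm]
  refine Finset.sum_congr rfl fun b _ => ?_
  rw [← Finset.mul_sum]
  rfl

lemma MC.miss_T (M : MC S) {t : S} (ht : t ∈ M.T) : ∀ n, M.miss n t = 0 := by
  intro n
  induction n with
  | zero => simp [M.miss_zero, ht]
  | succ n ih =>
    rw [M.miss_succ]
    have : ∀ b : S, M.δ t b * M.miss n b = if b = t then M.miss n t else 0 := by
      intro b
      rw [M.delta_T ht b]
      split <;> simp_all
    simp only [this]
    simp [ih]

lemma MC.miss_nonneg (M : MC S) (n : ℕ) (s : S) : 0 ≤ M.miss n s :=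
  Finset.sum_nonneg fun b _ => M.Pn_nonneg n s b

lemma MC.miss_le_one (M : MC S) (n : ℕ) (s : S) : M.miss n s ≤ 1 := by
  calc M.miss n s ≤ ∑ s' : S, (M.P ^ n) s s' :=
        Finset.sum_le_sum_of_subset_of_nonneg (Finset.filter_subset _ _)
          (fun b _ _ => M.Pn_nonneg n s b)
    _ = 1 := M.Pn_rowsum n s

lemma MC.miss_add_eq (M : MC S) (a b : ℕ) (s : S) :
    M.miss (a + b) s = ∑ c : S, (M.P ^ a) s c * M.miss b c := by
  unfold MC.miss
  simp only [pow_add, Matrix.mul_apply]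
  rw [Finset.sum_comm]
  refine Finset.sum_congr rfl fun c _ => ?_
  rw [← Finset.mul_sum]

lemma MC.miss_add_le (M : MC S) (a b : ℕ) (s : S) {B : ℝ} (hB : 0 ≤ B)
    (h : ∀ s', M.miss b s' ≤ B) : M.miss (a + b) s ≤ M.miss a s * B := by
  rw [M.miss_add_eq]
  calc ∑ c : S, (M.P ^ a) s c * M.miss b c
      ≤ ∑ c : S, (M.P ^ a) s c * (if c ∈ M.T then 0 else B) := by
        refine Finset.sum_le_sum fun c _ => ?_
        by_cases hc : c ∈ M.T
        · simp [hc, M.miss_T hc b]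
        · simp only [hc, if_false]
          exact mul_le_mul_of_nonneg_left (h c) (M.Pn_nonneg a s c)
    _ = ∑ c ∈ Finset.univ.filter (fun x => x ∉ M.T), (M.P ^ a) s c * B := by
        rw [Finset.sum_filter]
        refine Finset.sum_congr rfl fun c _ => ?_
        by_cases hc : c ∈ M.T <;> simp [hc]
    _ = M.miss a s * B := by rw [← Finset.sum_mul]; rfl

lemma MC.path_prob [Nonempty S] (M : MC S) :
    ∀ n (a b : S), pathLen M.edge n a b → M.pmin ^ n ≤ (M.P ^ n) a b := by
  intro n
  induction n with
  | zero =>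
    intro a b h
    cases h
    simp [Matrix.one_apply_eq]
  | succ n ih =>
    intro a b h
    obtain ⟨c, hac, hcb⟩ := h
    have h1 : M.pmin ^ (n + 1) ≤ M.P a c * (M.P ^ n) c b := by
      rw [pow_succ']
      exact mul_le_mul (M.pmin_le hac) (ih c b hcb)
        (pow_nonneg M.pmin_pos.le n) (M.nonneg a c)
    calc M.pmin ^ (n + 1) ≤ M.P a c * (M.P ^ n) c b := h1
      _ ≤ ∑ d : S, M.P a d * (M.P ^ n) d b :=
        Finset.single_le_sum
          (fun d _ => mul_nonneg (M.nonneg a d) (M.Pn_nonneg n d b))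
          (Finset.mem_univ c)
      _ = (M.P ^ (n + 1)) a b := by rw [pow_succ', Matrix.mul_apply]

lemma MC.hit_sum (M : MC S) (n : ℕ) (s : S) :
    M.miss n s = 1 - ∑ t ∈ M.T, (M.P ^ n) s t := by
  have hsplit := Finset.sum_filter_add_sum_filter_not Finset.univ
    (fun x => x ∈ M.T) (fun s' => (M.P ^ n) s s')
  have hT : Finset.univ.filter (fun x => x ∈ M.T) = M.T := by
    ext x; simp
  rw [M.Pn_rowsum n s] at hsplit
  rw [hT] at hsplit
  unfold MC.miss
  linarith

lemma MC.miss_level [Nonempty S] (M : MC S)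
    (hreach : ∀ a : S, reaches M.edge (M.T : Set S) a)
    {i : ℕ} {s : S} (hs : s ∈ M.levelSet i) : M.miss i s ≤ 1 - M.pmin ^ i := by
  have hlev0 : ∀ a : S, a ∈ M.level0 → a ∈ M.T := by
    intro a ha
    rcases ha with h | h
    · exact h
    · exact absurd (hreach a) h
  cases i with
  | zero =>
    have hsT : s ∈ M.T := hlev0 s hs
    simp [M.miss_T hsT 0]
  | succ i =>
    have hd : distTo M.edge M.level0 s = i + 1 := hs
    have hne : {n | ∃ a ∈ M.level0, pathLen M.edge n s a}.Nonempty := by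
      obtain ⟨n, a, ha, hp⟩ := hreach s
      exact ⟨n, a, Or.inl ha, hp⟩
    have hmem := Nat.sInf_mem hne
    rw [show sInf {n | ∃ a ∈ M.level0, pathLen M.edge n s a} =
        distTo M.edge M.level0 s from rfl, hd] at hmem
    obtain ⟨a, ha, hp⟩ := hmem
    have haT : a ∈ M.T := hlev0 a ha
    have h1 : M.pmin ^ (i + 1) ≤ (M.P ^ (i + 1)) s a := M.path_prob (i + 1) s a hp
    have h2 : (M.P ^ (i + 1)) s a ≤ ∑ t ∈ M.T, (M.P ^ (i + 1)) s t :=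
      Finset.single_le_sum (fun t _ => M.Pn_nonneg (i + 1) s t) haT
    rw [M.hit_sum]
    linarith

lemma MC.miss_k [Nonempty S] (M : MC S) {k : ℕ} (hk : 1 ≤ k)
    (hlev : M.hasLevels k)
    (hreach : ∀ a : S, reaches M.edge (M.T : Set S) a)
    (s : S) : M.miss k s ≤ 1 - M.pmin ^ k := by
  have hp0 := M.pmin_pos
  have hp1 := M.pmin_le_one
  by_cases hsT : s ∈ M.T
  · rw [M.miss_T hsT k]
    have : M.pmin ^ k ≤ 1 := pow_le_one₀ hp0.le hp1
    linarith
  · set d := distTo M.edge M.level0 s with hd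
    have hne : {n | ∃ a ∈ M.level0, pathLen M.edge n s a}.Nonempty := by
      obtain ⟨n, a, ha, hp⟩ := hreach s
      exact ⟨n, a, Or.inl ha, hp⟩
    have hmem := Nat.sInf_mem hne
    have hd1 : 1 ≤ d := by
      by_contra h
      have hd0 : d = 0 := by omega
      rw [show sInf {n | ∃ a ∈ M.level0, pathLen M.edge n s a} = d from rfl, hd0] at hmem
      obtain ⟨a, ha, hp⟩ := hmem
      cases hp
      rcases ha with h' | h'
      · exact hsT h'
      · exact h' (hreach s)
    obtain ⟨m, hm⟩ : ∃ m, d = m + 1 := ⟨d - 1, by omega⟩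
    have hsl : s ∈ M.levelSet d := by
      rw [hm]
      show distTo M.edge M.level0 s = m + 1
      rw [← hd]
      exact hm
    have hdk : d ≤ k := by
      by_contra h
      have := hlev.2 d (by omega)
      rw [this] at hsl
      exact hsl
    have h1 : M.miss d s ≤ 1 - M.pmin ^ d := M.miss_level hreach hsl
    have h2 : M.miss k s ≤ M.miss d s * 1 := by
      have := M.miss_add_le d (k - d) s (le_refl (0:ℝ) |>.trans zero_le_one)
        (fun s' => M.miss_le_one (k - d) s')
      rwa [show d + (k - d) = k by omega] at this
    have h3 : M.pmin ^ k ≤ M.pmin ^ d := pow_le_pow_of_le_one hp0.le hp1 hdk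
    linarith

lemma MC.miss_kt [Nonempty S] (M : MC S) {k : ℕ} (hk : 1 ≤ k)
    (hlev : M.hasLevels k)
    (hreach : ∀ a : S, reaches M.edge (M.T : Set S) a) :
    ∀ t (s : S), M.miss (k * t) s ≤ (1 - M.pmin ^ k) ^ t := by
  have hp0 := M.pmin_pos
  have hp1 := M.pmin_le_one
  have hpk : (0:ℝ) ≤ 1 - M.pmin ^ k := by
    have : M.pmin ^ k ≤ 1 := pow_le_one₀ hp0.le hp1
    linarith
  intro t
  induction t with
  | zero => intro s; simpa using M.miss_le_one 0 s
  | succ t ih =>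
    intro s
    have h1 : M.miss (k + k * t) s ≤ M.miss k s * (1 - M.pmin ^ k) ^ t :=
      M.miss_add_le k (k * t) s (pow_nonneg hpk t) (fun s' => ih s')
    have h2 : M.miss k s ≤ 1 - M.pmin ^ k := M.miss_k hk hlev hreach s
    calc M.miss (k * (t + 1)) s = M.miss (k + k * t) s := by ring_nf
      _ ≤ M.miss k s * (1 - M.pmin ^ k) ^ t := h1
      _ ≤ (1 - M.pmin ^ k) * (1 - M.pmin ^ k) ^ t :=
        mul_le_mul_of_nonneg_right h2 (pow_nonneg hpk t)
      _ = (1 - M.pmin ^ k) ^ (t + 1) := (pow_succ' _ _).symm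

lemma MC.reach_diff (M : MC S) (w : S → ℝ) :
    ∀ n (s : S),
      (M.reachUpdate w)^[n]
          (fun a => if a ∈ M.T then w a else sSup (w '' (M.T : Set S))) s
        - (M.reachUpdate w)^[n] (fun a => if a ∈ M.T then w a else 0) s
      = sSup (w '' (M.T : Set S)) * M.miss n s := by
  intro n
  induction n with
  | zero =>
    intro s
    simp only [Function.iterate_zero, id_eq, M.miss_zero]
    by_cases hs : s ∈ M.T <;> simp [hs]
  | succ n ih =>
    intro s
    simp only [Function.iterate_succ_apply', MC.reachUpdate]
    by_cases hs : s ∈ M.T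
    · simp [hs, M.miss_T hs (n + 1)]
    · simp only [hs, if_false]
      rw [← Finset.sum_sub_distrib]
      have : ∀ b : S,
          M.δ s b * (M.reachUpdate w)^[n]
              (fun a => if a ∈ M.T then w a else sSup (w '' (M.T : Set S))) b
            - M.δ s b * (M.reachUpdate w)^[n]
              (fun a => if a ∈ M.T then w a else 0) b
          = sSup (w '' (M.T : Set S)) * (M.δ s b * M.miss n b) := by
        intro b
        rw [← mul_sub, ih b]
        ring
      simp only [this]
      rw [← Finset.mul_sum, M.miss_succ]

/-- Speed of convergence of interval value iteration for weighted
reachability: in a Markov chain with `k ≥ 1` levels in which every state can reach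
`T`, after `k·t` Bellman updates starting from the initial lower and upper vectors,
the interval at any state of level `i` has size at most
`(1 - p_min^i)·(1 - p_min^k)^(t-1)·w_max`. -/
theorem stmt_1 {S : Type} [Fintype S] [DecidableEq S] [Nonempty S]
    (M : MC S) (k : ℕ) (hk : 1 ≤ k) (hlev : M.hasLevels k)
    (hreach : ∀ a : S, reaches M.edge (M.T : Set S) a)
    (w : S → ℝ) (hw : ∀ t ∈ M.T, 0 ≤ w t) :
    ∀ t : ℕ, 1 ≤ t → ∀ i : ℕ, i ≤ k → ∀ s ∈ M.levelSet i,
      (M.reachUpdate w)^[k * t]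
          (fun a => if a ∈ M.T then w a else sSup (w '' (M.T : Set S))) s
        - (M.reachUpdate w)^[k * t] (fun a => if a ∈ M.T then w a else 0) s
      ≤ (1 - M.pmin ^ i) * (1 - M.pmin ^ k) ^ (t - 1) * sSup (w '' (M.T : Set S)) := by
  intro t ht i hi s hs
  have hp0 := M.pmin_pos
  have hp1 := M.pmin_le_one
  have hpk : (0:ℝ) ≤ 1 - M.pmin ^ k := by
    have : M.pmin ^ k ≤ 1 := pow_le_one₀ hp0.le hp1
    linarith
  set W := sSup (w '' (M.T : Set S)) with hW
  have hW0 : 0 ≤ W := by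
    obtain ⟨n, a, ha, _⟩ := hreach (Classical.arbitrary S)
    have haT : a ∈ M.T := ha
    have hbdd : BddAbove (w '' (M.T : Set S)) :=
      Set.Finite.bddAbove ((M.T : Set S).toFinite.image w)
    have : w a ≤ W := le_csSup hbdd ⟨a, haT, rfl⟩
    have := hw a haT
    linarith
  rw [M.reach_diff w (k * t) s]
  -- bound miss (k * t) s
  have hmiss_i : M.miss i s ≤ 1 - M.pmin ^ i := M.miss_level hreach hs
  have hmiss_k : M.miss k s ≤ 1 - M.pmin ^ i := by
    have h2 : M.miss (i + (k - i)) s ≤ M.miss i s * 1 :=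
      M.miss_add_le i (k - i) s zero_le_one (fun s' => M.miss_le_one (k - i) s')
    rw [show i + (k - i) = k by omega, mul_one] at h2
    linarith
  have hmiss_kt : M.miss (k * t) s ≤ (1 - M.pmin ^ i) * (1 - M.pmin ^ k) ^ (t - 1) := by
    have h1 : M.miss (k + k * (t - 1)) s ≤ M.miss k s * (1 - M.pmin ^ k) ^ (t - 1) :=
      M.miss_add_le k (k * (t - 1)) s (pow_nonneg hpk (t - 1))
        (fun s' => M.miss_kt hk hlev hreach (t - 1) s')
    rw [show k + k * (t - 1) = k * t by
      have : t - 1 + 1 = t := by omega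
      calc k + k * (t - 1) = k * (t - 1 + 1) := by ring
        _ = k * t := by rw [this]] at h1
    calc M.miss (k * t) s ≤ M.miss k s * (1 - M.pmin ^ k) ^ (t - 1) := h1
      _ ≤ (1 - M.pmin ^ i) * (1 - M.pmin ^ k) ^ (t - 1) :=
        mul_le_mul_of_nonneg_right hmiss_k (pow_nonneg hpk (t - 1))
  calc W * M.miss (k * t) s
      ≤ W * ((1 - M.pmin ^ i) * (1 - M.pmin ^ k) ^ (t - 1)) :=
        mul_le_mul_of_nonneg_left hmiss_kt hW0
    _ = (1 - M.pmin ^ i) * (1 - M.pmin ^ k) ^ (t - 1) * W := by ring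
end

section
/- Let M be a Markov chain with k ≥ 1 levels in which every state can reach T along edges, with weight function w : S → (0,∞), SSP Bellman update L, and initial vectors v̲_0, v̄_0. Then for every integer t ≥ 1, every 0 ≤ i ≤ k, and every state s in level ℓ_i: (L^{k·t} v̄_0)(s) − (L^{k·t} v̲_0)(s) ≤ (1 − p_min^i)·(1 − p_min^k)^{t−1}·C, where C := w_max·(k+1)/p_min^k and w_max := max_{s ∈ S} w(s). -/
variable {S : Type} [Fintype S] [DecidableEq S]

section AuxStmt2

lemma pathLen_append {r : S → S → Prop} {m n : ℕ} {a b c : S}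
    (h1 : pathLen r m a b) (h2 : pathLen r n b c) : pathLen r (m + n) a c := by
  induction m generalizing a with
  | zero =>
      have hab : a = b := h1
      subst hab
      rw [Nat.zero_add]
      exact h2
  | succ m ih =>
      obtain ⟨d, hd, hp⟩ := h1
      rw [Nat.succ_add]
      exact ⟨d, hd, ih hp⟩

lemma pathLen_loop {r : S → S → Prop} {a : S} (h : r a a) : ∀ n, pathLen r n a a
  | 0 => rfl
  | n + 1 => ⟨a, h, pathLen_loop h n⟩

lemma MC.pmin_facts (M : MC S) [Nonempty S] :
    0 < M.pmin ∧ M.pmin ≤ 1 ∧ ∀ a b : S, 0 < M.δ a b → M.pmin ≤ M.δ a b := by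
  classical
  have hQ : M.pmin = sInf {p : ℝ | 0 < p ∧ ∃ s s' : S, M.δ s s' = p} := rfl
  set Q : Set ℝ := {p : ℝ | 0 < p ∧ ∃ s s' : S, M.δ s s' = p} with hQdef
  have hfin : Q.Finite := by
    apply (Set.finite_range (fun p : S × S => M.δ p.1 p.2)).subset
    rintro p ⟨hp, s, s', rfl⟩
    exact ⟨(s, s'), rfl⟩
  have hne : Q.Nonempty := by
    obtain ⟨a⟩ := (inferInstance : Nonempty S)
    have h1 : ∑ s' : S, M.δ a s' = 1 := M.rowsum a
    have : ∃ s', M.δ a s' ≠ 0 := by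
      by_contra h
      push_neg at h
      simp [h] at h1
    obtain ⟨s', hs'⟩ := this
    exact ⟨M.δ a s', lt_of_le_of_ne (M.nonneg a s') (Ne.symm hs'), a, s', rfl⟩
  have hmem : sInf Q ∈ Q := hne.csInf_mem hfin
  refine ⟨hQ ▸ hmem.1, ?_, ?_⟩
  · obtain ⟨hpos, s, s', hss⟩ := hmem
    rw [hQ, ← hss]
    calc M.δ s s' ≤ ∑ x : S, M.δ s x :=
          Finset.single_le_sum (fun i _ => M.nonneg s i) (Finset.mem_univ s')
      _ = 1 := M.rowsum s
  · intro a b hab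
    rw [hQ]
    exact csInf_le hfin.bddBelow ⟨hab, a, b, rfl⟩

end AuxStmt2

/-- Speed of convergence of interval value iteration for SSP:
in a Markov chain with `k ≥ 1` levels in which every state can reach `T`, after
`k·t` SSP Bellman updates starting from the initial lower and upper vectors, the
interval at any state of level `i` has size at most
`(1 - p_min^i)·(1 - p_min^k)^(t-1)·C` where `C = w_max·(k+1)/p_min^k`. -/
theorem stmt_2 {S : Type} [Fintype S] [DecidableEq S] [Nonempty S]
    (M : MC S) (k : ℕ) (hk : 1 ≤ k) (hlev : M.hasLevels k)
    (hreach : ∀ a : S, reaches M.edge (M.T : Set S) a)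
    (w : S → ℝ) (hw : ∀ a : S, 0 < w a) :
    ∀ t : ℕ, 1 ≤ t → ∀ i : ℕ, i ≤ k → ∀ s ∈ M.levelSet i,
      (M.sspUpdate w)^[k * t]
          (fun a => if a ∈ M.T then w a
            else sSup (Set.range w) * ((k : ℝ) + 1) / M.pmin ^ k) s
        - (M.sspUpdate w)^[k * t]
          (fun a => if a ∈ M.T then w a else sInf (Set.range w)) s
      ≤ (1 - M.pmin ^ i) * (1 - M.pmin ^ k) ^ (t - 1)
          * (sSup (Set.range w) * ((k : ℝ) + 1) / M.pmin ^ k) := by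
    classical
  obtain ⟨hp0, hp1, hple⟩ := M.pmin_facts
  set p := M.pmin with hp
  have hpk_pos : 0 < p ^ k := pow_pos hp0 k
  have hpk_le1 : p ^ k ≤ 1 := pow_le_one₀ hp0.le hp1
  have hrne : (Set.range w).Nonempty := Set.range_nonempty w
  have hrfin : (Set.range w).Finite := Set.finite_range w
  set wmax := sSup (Set.range w) with hwmax
  set wmin := sInf (Set.range w) with hwmin
  have hwmax_ge : ∀ a, w a ≤ wmax := fun a => le_csSup hrfin.bddAbove ⟨a, rfl⟩
  have hwmin_le : ∀ a, wmin ≤ w a := fun a => csInf_le hrfin.bddBelow ⟨a, rfl⟩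
  have hwmin_pos : 0 < wmin := by
    obtain ⟨a, ha⟩ := hrne.csInf_mem hrfin
    rw [hwmin, ← ha]; exact hw a
  have hwmax_pos : 0 < wmax :=
    lt_of_lt_of_le hwmin_pos (le_trans (hwmin_le (Classical.arbitrary S)) (hwmax_ge _))
  set C := wmax * ((k : ℝ) + 1) / p ^ k with hC
  have hC_ge_wmax : wmax ≤ C := by
    rw [hC, le_div_iff₀ hpk_pos]
    nlinarith [hwmax_pos]
  have hC_nonneg : 0 ≤ C := le_trans hwmax_pos.le hC_ge_wmax
  have hwmin_le_C : wmin ≤ C :=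
    le_trans (le_trans (hwmin_le (Classical.arbitrary S)) (hwmax_ge _)) hC_ge_wmax
  set vU : S → ℝ := fun a => if a ∈ M.T then w a else C with hvU
  set vL : S → ℝ := fun a => if a ∈ M.T then w a else wmin with hvL
  set D : ℕ → S → ℝ :=
    fun n s => (M.sspUpdate w)^[n] vU s - (M.sspUpdate w)^[n] vL s with hD
  -- level structure facts
  have hlevel0 : M.level0 = (M.T : Set S) := by
    ext a
    simp only [MC.level0, Set.mem_setOf_eq, Finset.mem_coe]
    constructor
    · rintro (h | h)
      · exact h
      · exact absurd (hreach a) h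
    · intro h; exact Or.inl h
  have hedge_loop : ∀ a ∈ M.T, M.edge a a := by
    intro a ha
    show 0 < M.δ a a
    rw [M.absorbing a ha]; exact one_pos
  have hdist_path : ∀ s : S,
      ∃ a ∈ (M.T : Set S), pathLen M.edge (distTo M.edge (M.T : Set S) s) s a := by
    intro s
    obtain ⟨n, a, ha, hpa⟩ := hreach s
    exact Nat.sInf_mem (⟨n, a, ha, hpa⟩ :
      {n | ∃ a ∈ (M.T : Set S), pathLen M.edge n s a}.Nonempty)
  have hdist_le : ∀ s : S, distTo M.edge (M.T : Set S) s ≤ k := by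
    intro s
    by_contra h
    push_neg at h
    obtain ⟨d', hd'⟩ : ∃ d', distTo M.edge (M.T : Set S) s = d' + 1 :=
      ⟨distTo M.edge (M.T : Set S) s - 1, by omega⟩
    have hsmem : s ∈ M.levelSet (d' + 1) := by
      show distTo M.edge M.level0 s = d' + 1
      rw [hlevel0]; exact hd'
    rw [hlev.2 (d' + 1) (by omega)] at hsmem
    exact hsmem
  have hpath_k : ∀ s : S, ∃ a ∈ M.T, pathLen M.edge k s a := by
    intro s
    obtain ⟨a, ha, hpa⟩ := hdist_path s
    refine ⟨a, ha, ?_⟩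
    have h2 := pathLen_append hpa
      (pathLen_loop (hedge_loop a ha) (k - distTo M.edge (M.T : Set S) s))
    rwa [Nat.add_sub_cancel' (hdist_le s)] at h2
  have hpath_lvl : ∀ i ≤ k, ∀ s ∈ M.levelSet i, ∃ a ∈ M.T, pathLen M.edge i s a := by
    intro i hi s hs
    match i, hs with
    | 0, hs =>
        have hs0 : s ∈ M.level0 := hs
        rw [hlevel0] at hs0
        exact ⟨s, hs0, show s = s from rfl⟩
    | i + 1, hs =>
        have hdist : distTo M.edge M.level0 s = i + 1 := hs
        rw [hlevel0] at hdist
        obtain ⟨a, ha, hpa⟩ := hdist_path s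
        rw [hdist] at hpa
        exact ⟨a, ha, hpa⟩
  -- Bellman-update difference recurrence
  have hstep : ∀ (u v : S → ℝ) (s : S),
      M.sspUpdate w u s - M.sspUpdate w v s
        = if s ∈ M.T then 0 else ∑ s' : S, M.δ s s' * (u s' - v s') := by
    intro u v s
    by_cases hs : s ∈ M.T
    · simp [MC.sspUpdate, hs]
    · simp only [MC.sspUpdate, hs, if_false, mul_sub, Finset.sum_sub_distrib]
      ring
  have hDsucc : ∀ (n : ℕ) (s : S),
      D (n + 1) s = if s ∈ M.T then 0 else ∑ s' : S, M.δ s s' * D n s' := by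
    intro n s
    simp only [hD]
    rw [Function.iterate_succ_apply', Function.iterate_succ_apply', hstep]
  have hsum_le : ∀ (s : S) (f : S → ℝ) (B : ℝ), (∀ a, f a ≤ B) →
      ∑ s' : S, M.δ s s' * f s' ≤ B := by
    intro s f B hf
    calc ∑ s' : S, M.δ s s' * f s' ≤ ∑ s' : S, M.δ s s' * B :=
          Finset.sum_le_sum (fun i _ => mul_le_mul_of_nonneg_left (hf i) (M.nonneg s i))
      _ = B := by rw [← Finset.sum_mul, M.rowsum, one_mul]
  have hgood_succ : ∀ (B : ℝ) (n : ℕ), 0 ≤ B →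
      ((∀ a, 0 ≤ D n a) ∧ (∀ a, D n a ≤ B) ∧ (∀ a ∈ M.T, D n a = 0)) →
      ((∀ a, 0 ≤ D (n + 1) a) ∧ (∀ a, D (n + 1) a ≤ B) ∧ (∀ a ∈ M.T, D (n + 1) a = 0)) := by
    intro B n hB h
    obtain ⟨h0, hub, hT⟩ := h
    refine ⟨?_, ?_, ?_⟩
    · intro a; rw [hDsucc]
      by_cases ha : a ∈ M.T
      · simp [ha]
      · simp only [ha, if_false]
        exact Finset.sum_nonneg (fun i _ => mul_nonneg (M.nonneg a i) (h0 i))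
    · intro a; rw [hDsucc]
      by_cases ha : a ∈ M.T
      · simp [ha, hB]
      · simp only [ha, if_false]
        exact hsum_le a _ B hub
    · intro a ha; rw [hDsucc]; simp [ha]
  have hgood_iter : ∀ (B : ℝ), 0 ≤ B → ∀ n : ℕ,
      ((∀ a, 0 ≤ D n a) ∧ (∀ a, D n a ≤ B) ∧ (∀ a ∈ M.T, D n a = 0)) →
      ∀ m : ℕ, ((∀ a, 0 ≤ D (n + m) a) ∧ (∀ a, D (n + m) a ≤ B) ∧
        (∀ a ∈ M.T, D (n + m) a = 0)) := by
    intro B hB n h m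
    induction m with
    | zero => exact h
    | succ m ih => exact hgood_succ B (n + m) hB ih
  -- contraction along a path to the target
  have hcontract : ∀ (j : ℕ) (B : ℝ), 0 ≤ B → ∀ n : ℕ,
      ((∀ a, 0 ≤ D n a) ∧ (∀ a, D n a ≤ B) ∧ (∀ a ∈ M.T, D n a = 0)) →
      ∀ s a : S, a ∈ M.T → pathLen M.edge j s a → D (n + j) s ≤ (1 - p ^ j) * B := by
    intro j
    induction j with
    | zero =>
        intro B hB n h s a haT hpa
        have hsa : s = a := hpa
        subst hsa
        have : D (n + 0) s = 0 := h.2.2 s haT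
        rw [this]
        simp
    | succ j ih =>
        intro B hB n h s a haT hpath
        obtain ⟨b, hsb, hpb⟩ := hpath
        have hpj : 0 ≤ p ^ j := pow_nonneg hp0.le j
        have hpj1 : p ^ (j + 1) ≤ 1 := pow_le_one₀ hp0.le hp1
        rw [← Nat.add_assoc, hDsucc]
        by_cases hsT : s ∈ M.T
        · simp only [hsT, if_true]
          nlinarith
        · simp only [hsT, if_false]
          have hub := (hgood_iter B hB n h j).2.1
          have hDb := ih B hB n h b a haT hpb
          have hδ : p ≤ M.δ s b := hple s b hsb
          have hsplit : ∑ s' : S, M.δ s s' * D (n + j) s'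
              = M.δ s b * D (n + j) b
                + ∑ s' ∈ Finset.univ.erase b, M.δ s s' * D (n + j) s' :=
            (Finset.add_sum_erase _ _ (Finset.mem_univ b)).symm
          have hrow : ∑ s' ∈ Finset.univ.erase b, M.δ s s' = 1 - M.δ s b := by
            have h1 := Finset.add_sum_erase Finset.univ (M.δ s) (Finset.mem_univ b)
            rw [M.rowsum s] at h1
            linarith
          have hrest : ∑ s' ∈ Finset.univ.erase b, M.δ s s' * D (n + j) s'
              ≤ (1 - M.δ s b) * B := by
            calc ∑ s' ∈ Finset.univ.erase b, M.δ s s' * D (n + j) s'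
                ≤ ∑ s' ∈ Finset.univ.erase b, M.δ s s' * B :=
                  Finset.sum_le_sum
                    (fun i _ => mul_le_mul_of_nonneg_left (hub i) (M.nonneg s i))
              _ = (1 - M.δ s b) * B := by rw [← Finset.sum_mul, hrow]
          have hfirst : M.δ s b * D (n + j) b ≤ M.δ s b * ((1 - p ^ j) * B) :=
            mul_le_mul_of_nonneg_left hDb (M.nonneg s b)
          have hps : p ^ (j + 1) = p ^ j * p := pow_succ p j
          rw [hsplit]
          nlinarith [mul_le_mul_of_nonneg_right
            (mul_le_mul_of_nonneg_right hδ hpj) hB]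
  -- base case
  have hD0 : (∀ a, 0 ≤ D 0 a) ∧ (∀ a, D 0 a ≤ C) ∧ (∀ a ∈ M.T, D 0 a = 0) := by
    refine ⟨?_, ?_, ?_⟩
    · intro a
      simp only [hD, Function.iterate_zero, id_eq, hvU, hvL]
      by_cases ha : a ∈ M.T <;> simp [ha] <;> linarith
    · intro a
      simp only [hD, Function.iterate_zero, id_eq, hvU, hvL]
      by_cases ha : a ∈ M.T <;> simp [ha] <;> linarith
    · intro a ha
      simp only [hD, Function.iterate_zero, id_eq, hvU, hvL]
      simp [ha]
  have hq : 0 ≤ 1 - p ^ k := by linarith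
  -- bound after m rounds of k steps
  have hround : ∀ m : ℕ,
      (∀ a, 0 ≤ D (k * m) a) ∧ (∀ a, D (k * m) a ≤ C * (1 - p ^ k) ^ m) ∧
        (∀ a ∈ M.T, D (k * m) a = 0) := by
    intro m
    induction m with
    | zero => simpa using hD0
    | succ m ih =>
        have hB : 0 ≤ C * (1 - p ^ k) ^ m := mul_nonneg hC_nonneg (pow_nonneg hq m)
        have hiter := hgood_iter (C * (1 - p ^ k) ^ m) hB (k * m) ih k
        refine ⟨?_, ?_, ?_⟩
        · intro a; exact hiter.1 a
        · intro a
          obtain ⟨b, hbT, hpb⟩ := hpath_k a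
          have hcon := hcontract k (C * (1 - p ^ k) ^ m) hB (k * m) ih a b hbT hpb
          calc D (k * (m + 1)) a ≤ (1 - p ^ k) * (C * (1 - p ^ k) ^ m) := hcon
            _ = C * (1 - p ^ k) ^ (m + 1) := by ring
        · intro a ha; exact hiter.2.2 a ha
  -- conclusion
  intro t ht i hi s hs
  obtain ⟨t', rfl⟩ : ∃ t', t = t' + 1 := ⟨t - 1, by omega⟩
  obtain ⟨a, haT, hpa⟩ := hpath_lvl i hi s hs
  have hB : 0 ≤ C * (1 - p ^ k) ^ t' := mul_nonneg hC_nonneg (pow_nonneg hq t')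
  have hg := hgood_iter (C * (1 - p ^ k) ^ t') hB (k * t') (hround t') (k - i)
  have hfin := hcontract i (C * (1 - p ^ k) ^ t') hB (k * t' + (k - i)) hg s a haT hpa
  have hidx : k * t' + (k - i) + i = k * (t' + 1) := by
    rw [Nat.add_assoc, Nat.sub_add_cancel hi, Nat.mul_succ]
  rw [hidx] at hfin
  show D (k * (t' + 1)) s ≤ _
  calc D (k * (t' + 1)) s ≤ (1 - p ^ i) * (C * (1 - p ^ k) ^ t') := hfin
    _ = (1 - p ^ i) * (1 - p ^ k) ^ (t' + 1 - 1) * C := by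
        rw [Nat.add_sub_cancel]; ring
end

section
/- Let M be a Markov chain with targets T and weight function w : T → [0,∞) in which every state can reach T along edges, let s ∉ T, and let γ ≥ 0. Let f : S → ℝ be the weighted reachability value vector of the reduced MC M[s = γ], and set γ' := ∑_{s'} δ(s,s') f(s'). Then γ' > γ if and only if val_M(s) > γ, where val_M is the weighted reachability value vector of M. -/
variable {S : Type} [Fintype S] [DecidableEq S]

section Aux
open Filter Finset Topology

variable {S : Type} [Fintype S] [DecidableEq S]

lemma MC.tzero (N : MC S) {t b : S} (ht : t ∈ N.T) (hb : b ≠ t) : N.δ t b = 0 := by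
  have h3 : N.δ t t + ∑ b ∈ Finset.univ.erase t, N.δ t b = 1 := by
    rw [Finset.add_sum_erase _ _ (Finset.mem_univ t)]; exact N.rowsum t
  rw [N.absorbing t ht] at h3
  have h4 : ∑ b ∈ Finset.univ.erase t, N.δ t b = 0 := by linarith
  have := (Finset.sum_eq_zero_iff_of_nonneg (fun b _ => N.nonneg t b)).mp h4
  exact this b (Finset.mem_erase.mpr ⟨hb, Finset.mem_univ b⟩)

lemma MC.P_apply (N : MC S) (a b : S) : N.P a b = N.δ a b := rfl

lemma MC.pow_succ_apply (N : MC S) (n : ℕ) (a b : S) :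
    (N.P ^ (n+1)) a b = ∑ c, (N.P ^ n) a c * N.δ c b := by
  rw [pow_succ, Matrix.mul_apply]; rfl

lemma MC.pow_succ_apply' (N : MC S) (n : ℕ) (a b : S) :
    (N.P ^ (n+1)) a b = ∑ c, N.δ a c * (N.P ^ n) c b := by
  rw [pow_succ', Matrix.mul_apply]; rfl

lemma MC.pow_nonneg (N : MC S) (n : ℕ) (a b : S) : 0 ≤ (N.P ^ n) a b := by
  induction n generalizing a b with
  | zero => by_cases h : a = b <;> simp [Matrix.one_apply, h]
  | succ n ih =>
      rw [N.pow_succ_apply]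
      exact Finset.sum_nonneg fun c _ => mul_nonneg (ih a c) (N.nonneg c b)

lemma MC.pow_rowsum (N : MC S) (n : ℕ) (a : S) : ∑ b, (N.P ^ n) a b = 1 := by
  induction n generalizing a with
  | zero => simp [Matrix.one_apply]
  | succ n ih =>
      simp only [N.pow_succ_apply']
      rw [Finset.sum_comm]
      have : ∀ c ∈ Finset.univ, ∑ b, N.δ a c * (N.P ^ n) c b = N.δ a c := by
        intro c _
        rw [← Finset.mul_sum, ih c, mul_one]
      rw [Finset.sum_congr rfl this, N.rowsum]

lemma MC.pow_le_one (N : MC S) (n : ℕ) (a b : S) : (N.P ^ n) a b ≤ 1 := by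
  calc (N.P ^ n) a b ≤ ∑ b', (N.P ^ n) a b' :=
        Finset.single_le_sum (fun c _ => N.pow_nonneg n a c) (Finset.mem_univ b)
    _ = 1 := N.pow_rowsum n a

lemma MC.pow_target (N : MC S) {t : S} (ht : t ∈ N.T) (n : ℕ) (b : S) :
    (N.P ^ n) t b = if b = t then 1 else 0 := by
  induction n with
  | zero => simp [Matrix.one_apply, eq_comm]
  | succ n ih =>
      rw [N.pow_succ_apply']
      rw [Finset.sum_eq_single t]
      · rw [N.absorbing t ht, one_mul, ih]
      · intro c _ hc
        rw [N.tzero ht hc, zero_mul]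
      · intro h; exact absurd (Finset.mem_univ t) h

end Aux

section Aux2
open Filter Finset Topology

variable {S : Type} [Fintype S] [DecidableEq S]

/-- finite-horizon value sequence -/
noncomputable def vseq (N : MC S) (w : S → ℝ) (n : ℕ) (a : S) : ℝ :=
  ∑ t ∈ N.T, (N.P ^ n) a t * w t

lemma reachVal_eq (N : MC S) (w : S → ℝ) (a : S) :
    N.reachVal w a = ⨆ n : ℕ, vseq N w n a := rfl

lemma vseq_mono (N : MC S) {w : S → ℝ} (hw : ∀ t ∈ N.T, 0 ≤ w t) (a : S) :
    Monotone fun n => vseq N w n a := by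
  apply monotone_nat_of_le_succ
  intro n
  apply Finset.sum_le_sum
  intro t ht
  apply mul_le_mul_of_nonneg_right _ (hw t ht)
  calc (N.P ^ n) a t = (N.P ^ n) a t * N.δ t t := by rw [N.absorbing t ht, mul_one]
    _ ≤ ∑ c, (N.P ^ n) a c * N.δ c t :=
        Finset.single_le_sum (fun c _ => mul_nonneg (N.pow_nonneg n a c) (N.nonneg c t))
          (Finset.mem_univ t)
    _ = (N.P ^ (n+1)) a t := (N.pow_succ_apply n a t).symm

lemma vseq_nonneg (N : MC S) {w : S → ℝ} (hw : ∀ t ∈ N.T, 0 ≤ w t) (n : ℕ) (a : S) :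
    0 ≤ vseq N w n a :=
  Finset.sum_nonneg fun t ht => mul_nonneg (N.pow_nonneg n a t) (hw t ht)

lemma vseq_le (N : MC S) {w : S → ℝ} (hw : ∀ t ∈ N.T, 0 ≤ w t) (n : ℕ) (a : S) :
    vseq N w n a ≤ ∑ t ∈ N.T, w t :=
  Finset.sum_le_sum fun t ht => by
    calc (N.P ^ n) a t * w t ≤ 1 * w t :=
          mul_le_mul_of_nonneg_right (N.pow_le_one n a t) (hw t ht)
      _ = w t := one_mul _

lemma vseq_bddAbove (N : MC S) {w : S → ℝ} (hw : ∀ t ∈ N.T, 0 ≤ w t) (a : S) :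
    BddAbove (Set.range fun n => vseq N w n a) :=
  ⟨∑ t ∈ N.T, w t, by rintro x ⟨n, rfl⟩; exact vseq_le N hw n a⟩

lemma vseq_tendsto (N : MC S) {w : S → ℝ} (hw : ∀ t ∈ N.T, 0 ≤ w t) (a : S) :
    Tendsto (fun n => vseq N w n a) atTop (𝓝 (N.reachVal w a)) :=
  tendsto_atTop_ciSup (vseq_mono N hw a) (vseq_bddAbove N hw a)

lemma reachVal_nonneg (N : MC S) {w : S → ℝ} (hw : ∀ t ∈ N.T, 0 ≤ w t) (a : S) :
    0 ≤ N.reachVal w a :=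
  le_of_tendsto_of_tendsto' tendsto_const_nhds (vseq_tendsto N hw a)
    (fun n => vseq_nonneg N hw n a)

lemma reachVal_le_one (N : MC S) {w : S → ℝ} (hw : ∀ t ∈ N.T, 0 ≤ w t)
    (hw1 : ∀ t ∈ N.T, w t ≤ 1) (a : S) : N.reachVal w a ≤ 1 := by
  apply le_of_tendsto_of_tendsto' (vseq_tendsto N hw a) tendsto_const_nhds
  intro n
  calc vseq N w n a ≤ ∑ t ∈ N.T, (N.P ^ n) a t * 1 :=
        Finset.sum_le_sum fun t ht =>
          mul_le_mul_of_nonneg_left (hw1 t ht) (N.pow_nonneg n a t)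
    _ = ∑ t ∈ N.T, (N.P ^ n) a t := by simp
    _ ≤ ∑ t : S, (N.P ^ n) a t :=
        Finset.sum_le_sum_of_subset_of_nonneg (Finset.subset_univ _)
          (fun c _ _ => N.pow_nonneg n a c)
    _ = 1 := N.pow_rowsum n a

lemma vseq_succ (N : MC S) (w : S → ℝ) (n : ℕ) (a : S) :
    vseq N w (n+1) a = ∑ b, N.δ a b * vseq N w n b := by
  unfold vseq
  simp only [N.pow_succ_apply', Finset.sum_mul, Finset.mul_sum]
  rw [Finset.sum_comm]
  apply Finset.sum_congr rfl
  intro b _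
  apply Finset.sum_congr rfl
  intro t _
  ring

lemma reachVal_bellman (N : MC S) {w : S → ℝ} (hw : ∀ t ∈ N.T, 0 ≤ w t) (a : S) :
    N.reachVal w a = ∑ b, N.δ a b * N.reachVal w b := by
  have h1 : Tendsto (fun n => vseq N w (n+1) a) atTop (𝓝 (N.reachVal w a)) :=
    (vseq_tendsto N hw a).comp (tendsto_add_atTop_nat 1)
  have h2 : Tendsto (fun n => ∑ b, N.δ a b * vseq N w n b) atTop
      (𝓝 (∑ b, N.δ a b * N.reachVal w b)) :=
    tendsto_finset_sum _ fun b _ => (vseq_tendsto N hw b).const_mul _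
  exact tendsto_nhds_unique (by simpa only [vseq_succ] using h1) h2

lemma reachVal_target (N : MC S) (w : S → ℝ) {t : S} (ht : t ∈ N.T) :
    N.reachVal w t = w t := by
  have hv : ∀ n, vseq N w n t = w t := by
    intro n
    unfold vseq
    rw [Finset.sum_eq_single t]
    · rw [N.pow_target ht, if_pos rfl, one_mul]
    · intro c _ hc; rw [N.pow_target ht, if_neg hc, zero_mul]
    · intro h; exact absurd ht h
  rw [reachVal_eq]
  simp [hv]

end Aux2

section Aux3
open Filter Finset Topology

variable {S : Type} [Fintype S] [DecidableEq S]

/-- mass outside targets after n steps -/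
noncomputable def mseq (N : MC S) (n : ℕ) (a : S) : ℝ :=
  ∑ b ∈ Finset.univ.filter (fun b => b ∉ N.T), (N.P ^ n) a b

lemma mseq_nonneg (N : MC S) (n : ℕ) (a : S) : 0 ≤ mseq N n a :=
  Finset.sum_nonneg fun b _ => N.pow_nonneg n a b

lemma mseq_add_hit (N : MC S) (n : ℕ) (a : S) :
    mseq N n a + vseq N (fun _ => 1) n a = 1 := by
  unfold mseq
  have h1 : vseq N (fun _ => 1) n a = ∑ b ∈ Finset.univ.filter (fun b => b ∈ N.T), (N.P ^ n) a b := by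
    unfold vseq
    simp only [mul_one]
    rw [Finset.filter_univ_mem]
  rw [h1, add_comm, Finset.sum_filter_add_sum_filter_not, N.pow_rowsum]

lemma mseq_le_one (N : MC S) (n : ℕ) (a : S) : mseq N n a ≤ 1 := by
  have := mseq_add_hit N n a
  have := vseq_nonneg N (w := fun _ => 1) (fun _ _ => zero_le_one) n a
  linarith

lemma mseq_anti (N : MC S) (a : S) : Antitone fun n => mseq N n a := by
  intro m n hmn
  have h1 := mseq_add_hit N m a
  have h2 := mseq_add_hit N n a
  have := vseq_mono N (w := fun _ => 1) (fun _ _ => zero_le_one) a hmn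
  simp only at this ⊢
  linarith

lemma pathLen_pos (N : MC S) (n : ℕ) (a b : S) (hp : pathLen N.edge n a b) :
    0 < (N.P ^ n) a b := by
  induction n generalizing a with
  | zero =>
      cases hp
      simp [Matrix.one_apply]
  | succ n ih =>
      obtain ⟨c, hac, hcb⟩ := hp
      rw [N.pow_succ_apply']
      have hterm : 0 < N.δ a c * (N.P ^ n) c b := mul_pos hac (ih c hcb)
      calc (0:ℝ) < N.δ a c * (N.P ^ n) c b := hterm
        _ ≤ ∑ c', N.δ a c' * (N.P ^ n) c' b :=
            Finset.single_le_sum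
              (fun c' _ => mul_nonneg (N.nonneg a c') (N.pow_nonneg n c' b))
              (Finset.mem_univ c)

/-- contraction: mseq (n0 + n) a ≤ mseq n0 a * (max over mseq n). -/
lemma mseq_submul (N : MC S) [Nonempty S] (n0 n : ℕ) (a : S) :
    mseq N (n0 + n) a ≤
      mseq N n0 a * Finset.univ.sup' Finset.univ_nonempty (fun c => mseq N n c) := by
  set Mn := Finset.univ.sup' Finset.univ_nonempty (fun c => mseq N n c) with hMn
  have hMn0 : 0 ≤ Mn := le_trans (mseq_nonneg N n (Classical.arbitrary S))
    (Finset.le_sup' _ (Finset.mem_univ _))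
  have key : ∀ b, (N.P ^ (n0 + n)) a b = ∑ c, (N.P ^ n0) a c * (N.P ^ n) c b := by
    intro b
    rw [pow_add, Matrix.mul_apply]
  unfold mseq
  simp only [key]
  rw [Finset.sum_comm]
  have hsplit : ∀ c ∈ Finset.univ,
      ∑ b ∈ Finset.univ.filter (fun b => b ∉ N.T), (N.P ^ n0) a c * (N.P ^ n) c b
        = (N.P ^ n0) a c * mseq N n c := by
    intro c _
    rw [← Finset.mul_sum]; rfl
  rw [Finset.sum_congr rfl hsplit]
  have hzero : ∀ c ∈ Finset.univ.filter (fun c => c ∈ N.T),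
      (N.P ^ n0) a c * mseq N n c = 0 := by
    intro c hc
    have hcT : c ∈ N.T := (Finset.mem_filter.mp hc).2
    have : mseq N n c = 0 := by
      unfold mseq
      apply Finset.sum_eq_zero
      intro b hb
      have hbT : b ∉ N.T := (Finset.mem_filter.mp hb).2
      rw [N.pow_target hcT, if_neg]
      rintro rfl; exact hbT hcT
    rw [this, mul_zero]
  calc ∑ c, (N.P ^ n0) a c * mseq N n c
      = ∑ c ∈ Finset.univ.filter (fun c => c ∉ N.T), (N.P ^ n0) a c * mseq N n c := by
        rw [← Finset.sum_filter_add_sum_filter_not Finset.univ (fun c => c ∈ N.T),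
          Finset.sum_eq_zero hzero, zero_add]
    _ ≤ ∑ c ∈ Finset.univ.filter (fun c => c ∉ N.T), (N.P ^ n0) a c * Mn := by
        apply Finset.sum_le_sum
        intro c _
        exact mul_le_mul_of_nonneg_left (Finset.le_sup' _ (Finset.mem_univ c))
          (N.pow_nonneg n0 a c)
    _ = mseq N n0 a * Mn := by rw [← Finset.sum_mul]; rfl

lemma mseq_tendsto_zero (N : MC S) [Nonempty S]
    (hreach : ∀ a : S, reaches N.edge (N.T : Set S) a) (a : S) :
    Tendsto (fun n => mseq N n a) atTop (𝓝 0) := by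
  -- choose path lengths
  have hn : ∀ a : S, ∃ n, ∃ t ∈ N.T, pathLen N.edge n a t := by
    intro a
    obtain ⟨n, t, ht, hp⟩ := hreach a
    exact ⟨n, t, ht, hp⟩
  set na : S → ℕ := fun a => (hn a).choose with hna
  set n0 : ℕ := Finset.univ.sup na + 1 with hn0
  have hn0pos : 0 < n0 := Nat.succ_pos _
  -- every state has positive hit prob by time n0
  have hhit : ∀ c : S, mseq N n0 c < 1 := by
    intro c
    obtain ⟨t, ht, hp⟩ := (hn c).choose_spec
    have hpos : 0 < vseq N (fun _ => 1) (na c) c := by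
      have h1 : 0 < (N.P ^ (na c)) c t := pathLen_pos N _ c t hp
      have : (N.P ^ (na c)) c t * 1 ≤ vseq N (fun _ => 1) (na c) c := by
        apply Finset.single_le_sum (f := fun t' => (N.P ^ (na c)) c t' * 1)
          (fun t' _ => mul_nonneg (N.pow_nonneg _ c t') zero_le_one) ht
      linarith
    have hmono : vseq N (fun _ => 1) (na c) c ≤ vseq N (fun _ => 1) n0 c := by
      apply vseq_mono N (fun _ _ => zero_le_one) c
      calc na c ≤ Finset.univ.sup na := Finset.le_sup (Finset.mem_univ c)
        _ ≤ n0 := Nat.le_succ _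
    have := mseq_add_hit N n0 c
    linarith
  set ρ : ℝ := Finset.univ.sup' Finset.univ_nonempty (fun c => mseq N n0 c) with hρ
  have hρ1 : ρ < 1 := by
    rw [hρ, Finset.sup'_lt_iff]
    intro c _; exact hhit c
  have hρ0 : 0 ≤ ρ := le_trans (mseq_nonneg N n0 (Classical.arbitrary S))
    (Finset.le_sup' _ (Finset.mem_univ _))
  -- Msup (k*n0) ≤ ρ^k
  have hM : ∀ k, Finset.univ.sup' Finset.univ_nonempty (fun c => mseq N (k * n0) c) ≤ ρ ^ k := by
    intro k
    induction k with
    | zero =>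
        rw [Finset.sup'_le_iff]
        intro c _
        simpa using mseq_le_one N 0 c
    | succ k ih =>
        rw [Finset.sup'_le_iff]
        intro c _
        have : (k + 1) * n0 = n0 + k * n0 := by ring
        rw [this]
        calc mseq N (n0 + k * n0) c
            ≤ mseq N n0 c * Finset.univ.sup' Finset.univ_nonempty (fun c => mseq N (k * n0) c) :=
              mseq_submul N n0 (k * n0) c
          _ ≤ ρ * ρ ^ k := by
              apply mul_le_mul _ ih _ hρ0
              · exact Finset.le_sup' _ (Finset.mem_univ c)
              · exact le_trans (mseq_nonneg N _ c) (Finset.le_sup' _ (Finset.mem_univ c))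
          _ = ρ ^ (k + 1) := (pow_succ' ρ k).symm
  -- squeeze
  have hub : ∀ n, mseq N n a ≤ ρ ^ (n / n0) := by
    intro n
    calc mseq N n a ≤ mseq N ((n / n0) * n0) a :=
          mseq_anti N a (Nat.div_mul_le_self n n0)
      _ ≤ Finset.univ.sup' Finset.univ_nonempty (fun c => mseq N ((n / n0) * n0) c) :=
          Finset.le_sup' _ (Finset.mem_univ a)
      _ ≤ ρ ^ (n / n0) := hM _
  have hdiv : Tendsto (fun n : ℕ => n / n0) atTop atTop := by
    apply Filter.tendsto_atTop_atTop.2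
    intro b
    exact ⟨b * n0, fun n hn' => (Nat.le_div_iff_mul_le hn0pos).mpr hn'⟩
  have hpow : Tendsto (fun n : ℕ => ρ ^ (n / n0)) atTop (𝓝 0) :=
    (tendsto_pow_atTop_nhds_zero_of_lt_one hρ0 hρ1).comp hdiv
  exact squeeze_zero (fun n => mseq_nonneg N n a) hub hpow

/-- Uniqueness of Bellman solutions. -/
lemma bellman_unique (N : MC S) [Nonempty S]
    (hreach : ∀ a : S, reaches N.edge (N.T : Set S) a)
    {w : S → ℝ} (hw : ∀ t ∈ N.T, 0 ≤ w t) (u : S → ℝ)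
    (hT : ∀ t ∈ N.T, u t = w t)
    (hB : ∀ a, a ∉ N.T → u a = ∑ b, N.δ a b * u b) (a : S) :
    u a = N.reachVal w a := by
  have hBall : ∀ a, u a = ∑ b, N.δ a b * u b := by
    intro a
    by_cases ha : a ∈ N.T
    · rw [Finset.sum_eq_single a]
      · rw [N.absorbing a ha, one_mul]
      · intro c _ hc; rw [N.tzero ha hc, zero_mul]
      · intro h; exact absurd (Finset.mem_univ a) h
    · exact hB a ha
  have hpow : ∀ n a, u a = ∑ b, (N.P ^ n) a b * u b := by
    intro n
    induction n with
    | zero => intro a; simp [Matrix.one_apply]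
    | succ n ih =>
        intro a
        rw [hBall a]
        simp only [N.pow_succ_apply', Finset.sum_mul, Finset.mul_sum]
        rw [Finset.sum_comm]
        apply Finset.sum_congr rfl
        intro b _
        rw [ih b, Finset.mul_sum]
        apply Finset.sum_congr rfl
        intro c _
        ring
  -- split
  set U : ℝ := Finset.univ.sup' Finset.univ_nonempty (fun b => |u b|) with hU
  have hUb : ∀ b, |u b| ≤ U := fun b => by
    rw [hU]; exact Finset.le_sup' (fun b => |u b|) (Finset.mem_univ b)
  have hsplit : ∀ n, u a = vseq N w n a +
      ∑ b ∈ Finset.univ.filter (fun b => b ∉ N.T), (N.P ^ n) a b * u b := by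
    intro n
    rw [hpow n a, ← Finset.sum_filter_add_sum_filter_not Finset.univ (fun b => b ∈ N.T)]
    congr 1
    unfold vseq
    rw [Finset.filter_univ_mem]
    apply Finset.sum_congr rfl
    intro t ht
    rw [hT t ht]
  have hRbound : ∀ n, |∑ b ∈ Finset.univ.filter (fun b => b ∉ N.T), (N.P ^ n) a b * u b|
      ≤ mseq N n a * U := by
    intro n
    calc |∑ b ∈ Finset.univ.filter (fun b => b ∉ N.T), (N.P ^ n) a b * u b|
        ≤ ∑ b ∈ Finset.univ.filter (fun b => b ∉ N.T), |(N.P ^ n) a b * u b| :=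
          Finset.abs_sum_le_sum_abs _ _
      _ ≤ ∑ b ∈ Finset.univ.filter (fun b => b ∉ N.T), (N.P ^ n) a b * U := by
          apply Finset.sum_le_sum
          intro b _
          rw [abs_mul, abs_of_nonneg (N.pow_nonneg n a b)]
          exact mul_le_mul_of_nonneg_left (hUb b) (N.pow_nonneg n a b)
      _ = mseq N n a * U := by rw [← Finset.sum_mul]; rfl
  have hR0 : Tendsto (fun n => ∑ b ∈ Finset.univ.filter (fun b => b ∉ N.T),
      (N.P ^ n) a b * u b) atTop (𝓝 0) := by
    have hmt := (mseq_tendsto_zero N hreach a).mul_const U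
    rw [zero_mul] at hmt
    exact squeeze_zero_norm (fun n => by rw [Real.norm_eq_abs]; exact hRbound n) hmt
  have h1 : Tendsto (fun n => vseq N w n a +
      ∑ b ∈ Finset.univ.filter (fun b => b ∉ N.T), (N.P ^ n) a b * u b) atTop
      (𝓝 (N.reachVal w a + 0)) :=
    (vseq_tendsto N hw a).add hR0
  rw [add_zero] at h1
  exact tendsto_nhds_unique (by simpa only [← hsplit] using tendsto_const_nhds) h1

end Aux3

section Aux4
open Filter Finset Topology

variable {S : Type} [Fintype S] [DecidableEq S]

lemma reduce_T (M : MC S) (s : S) : (M.reduce s).T = insert s M.T := rfl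

lemma reduce_δ_ne (M : MC S) {s a : S} (h : a ≠ s) (b : S) :
    (M.reduce s).δ a b = M.δ a b := by simp [MC.reduce, h]

lemma reduce_edge (M : MC S) {s a b : S} (h : a ≠ s) (he : M.edge a b) :
    (M.reduce s).edge a b := by
  unfold MC.edge at *
  rwa [reduce_δ_ne M h]

lemma reduce_reaches (M : MC S) (s : S)
    (hreach : ∀ a : S, reaches M.edge (M.T : Set S) a) (a : S) :
    reaches (M.reduce s).edge ((M.reduce s).T : Set S) a := by
  obtain ⟨n, t, ht, hp⟩ := hreach a
  induction n generalizing a with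
  | zero =>
      exact ⟨0, t, Finset.mem_coe.mpr (Finset.mem_insert_of_mem ht), hp⟩
  | succ n ih =>
      by_cases has : a = s
      · exact ⟨0, a, Finset.mem_coe.mpr (by rw [has, reduce_T]; exact Finset.mem_insert_self s _), rfl⟩
      · obtain ⟨c, hac, hp'⟩ := hp
        obtain ⟨m, t', ht', hp''⟩ := ih c hp'
        exact ⟨m + 1, t', ht', c, reduce_edge M has hac, hp''⟩

/-- split a path: either its suffix from `s` exists, or it avoids `s` (except possibly
    at the end) and is a path in the reduced chain. -/
lemma pathLen_split (M : MC S) (s : S) :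
    ∀ n (a t : S), pathLen M.edge n a t →
      (∃ j ≤ n, pathLen M.edge j s t) ∨ (a ≠ s ∧ pathLen (M.reduce s).edge n a t) := by
  intro n
  induction n with
  | zero =>
      intro a t hp
      cases hp
      by_cases h : a = s
      · exact Or.inl ⟨0, le_refl 0, show s = a from h.symm⟩
      · exact Or.inr ⟨h, rfl⟩
  | succ n ih =>
      intro a t hp
      obtain ⟨b, hab, hp'⟩ := hp
      by_cases h : a = s
      · exact Or.inl ⟨n + 1, le_refl _, by rw [← h]; exact ⟨b, hab, hp'⟩⟩
      · rcases ih b t hp' with ⟨j, hj, hpj⟩ | ⟨hbs, hp''⟩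
        · exact Or.inl ⟨j, le_trans hj (Nat.le_succ n), hpj⟩
        · exact Or.inr ⟨h, b, reduce_edge M h hab, hp''⟩

end Aux4

/-- Guess verification in Markov chains: let `f` be the weighted
reachability value vector of the reduced Markov chain `M[s = γ]` and
`γ' = ∑_{s'} δ(s,s')·f(s')`. Then `γ' > γ` iff `val_M(s) > γ`. -/
theorem stmt_3 {S : Type} [Fintype S] [DecidableEq S] [Nonempty S]
    (M : MC S) (hreach : ∀ a : S, reaches M.edge (M.T : Set S) a)
    (w : S → ℝ) (hw : ∀ t ∈ M.T, 0 ≤ w t)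
    (s : S) (hs : s ∉ M.T) (γ : ℝ) (hγ : 0 ≤ γ) :
    γ < ∑ s' : S, M.δ s s' * (M.reduce s).reachVal (Function.update w s γ) s'
      ↔ γ < M.reachVal w s := by
  classical
  set M' := M.reduce s with hM'
  set w' := Function.update w s γ with hw'def
  have hsT' : s ∈ M'.T := Finset.mem_insert_self s _
  have hw' : ∀ t ∈ M'.T, 0 ≤ w' t := by
    intro t ht
    by_cases h : t = s
    · rw [h, hw'def, Function.update_self]; exact hγ
    · rw [hw'def, Function.update_of_ne h]
      exact hw t (by rcases Finset.mem_insert.mp ht with h' | h'; exact absurd h' h; exact h')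
  have hreach' : ∀ a : S, reaches M'.edge (M'.T : Set S) a :=
    fun a => reduce_reaches M s hreach a
  -- the hitting-probability function h
  set ind : S → ℝ := fun b => if b = s then 1 else 0 with hind
  have hind0 : ∀ t ∈ M'.T, 0 ≤ ind t := by
    intro t _; by_cases h : t = s <;> simp [hind, h]
  have hind1 : ∀ t ∈ M'.T, ind t ≤ 1 := by
    intro t _; by_cases h : t = s <;> simp [hind, h]
  set hfn : S → ℝ := fun a => M'.reachVal ind a with hhfn
  have hfn_s : hfn s = 1 := by
    rw [hhfn]; simp only
    rw [reachVal_target M' ind hsT', hind]; simp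
  have hfn_T : ∀ t ∈ M.T, hfn t = 0 := by
    intro t ht
    have hts : t ≠ s := fun h => hs (h ▸ ht)
    rw [hhfn]; simp only
    rw [reachVal_target M' ind (Finset.mem_insert_of_mem ht), hind]; simp [hts]
  have hfn_le1 : ∀ a, hfn a ≤ 1 := fun a => reachVal_le_one M' hind0 hind1 a
  have hfn_nonneg : ∀ a, 0 ≤ hfn a := fun a => reachVal_nonneg M' hind0 a
  set V := M.reachVal w s with hV
  -- u = val_M - h * (V - γ) equals the reduced value f
  set u : S → ℝ := fun a => M.reachVal w a - hfn a * (V - γ) with hu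
  have hueq : ∀ b, u b = M'.reachVal w' b := by
    intro b
    apply bellman_unique M' hreach' hw'
    · intro t ht
      by_cases h : t = s
      · subst h
        rw [hu]; simp only
        rw [hfn_s, hw'def, Function.update_self, one_mul, ← hV]; ring
      · have htT : t ∈ M.T := by
          rcases Finset.mem_insert.mp ht with h' | h'; exact absurd h' h; exact h'
        rw [hu]; simp only
        rw [hfn_T t htT, reachVal_target M w htT, hw'def, Function.update_of_ne h]; ring
    · intro a ha
      have has : a ≠ s := fun h => ha (h ▸ hsT')
      have h1 : M.reachVal w a = ∑ c, M.δ a c * M.reachVal w c := reachVal_bellman M hw a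
      have h2 : hfn a = ∑ c, M.δ a c * hfn c := by
        have := reachVal_bellman M' hind0 a
        rw [hhfn]; simp only
        rw [this]
        apply Finset.sum_congr rfl
        intro c _
        rw [reduce_δ_ne M has]
      rw [hu]; simp only
      rw [h1, h2, Finset.sum_mul, ← Finset.sum_sub_distrib]
      apply Finset.sum_congr rfl
      intro c _
      rw [reduce_δ_ne M has]
      ring
  -- q = return probability, q < 1
  set q : ℝ := ∑ b, M.δ s b * hfn b with hq
  -- find c with δ s c > 0 and a reduced path from c to T avoiding s
  have hKne : {n | ∃ t ∈ M.T, pathLen M.edge n s t}.Nonempty := by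
    obtain ⟨n, t, ht, hp⟩ := hreach s
    exact ⟨n, t, ht, hp⟩
  set n₁ := sInf {n | ∃ t ∈ M.T, pathLen M.edge n s t} with hn₁
  obtain ⟨t₁, ht₁, hp₁⟩ := Nat.sInf_mem hKne
  rw [← hn₁] at hp₁
  have hn₁pos : n₁ ≠ 0 := by
    intro h
    rw [h] at hp₁
    cases hp₁
    exact hs ht₁
  obtain ⟨m, hm⟩ := Nat.exists_eq_succ_of_ne_zero hn₁pos
  rw [hm] at hp₁
  obtain ⟨c, hsc, hpc⟩ := hp₁
  have hcsplit := pathLen_split M s m c t₁ hpc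
  have hred : c ≠ s ∧ pathLen M'.edge m c t₁ := by
    rcases hcsplit with ⟨j, hj, hpj⟩ | hok
    · exfalso
      have : n₁ ≤ j := Nat.sInf_le ⟨t₁, ht₁, hpj⟩
      omega
    · exact hok
  -- e c > 0 where e is prob of reaching old targets in M'
  set w'' : S → ℝ := fun b => if b = s then 0 else 1 with hw''
  have hw''0 : ∀ t ∈ M'.T, 0 ≤ w'' t := by
    intro t _; by_cases h : t = s <;> simp [hw'', h]
  have ht₁s : t₁ ≠ s := fun h => hs (h ▸ ht₁)
  have hec : 0 < M'.reachVal w'' c := by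
    have h1 : 0 < (M'.P ^ m) c t₁ := pathLen_pos M' m c t₁ hred.2
    have h2 : (M'.P ^ m) c t₁ * w'' t₁ ≤ vseq M' w'' m c :=
      Finset.single_le_sum (f := fun t => (M'.P ^ m) c t * w'' t)
        (fun t _ => mul_nonneg (M'.pow_nonneg m c t) (hw''0 t (by assumption)))
        (Finset.mem_insert_of_mem ht₁)
    have h3 : vseq M' w'' m c ≤ M'.reachVal w'' c :=
      le_ciSup (vseq_bddAbove M' hw''0 c) m
    have h4 : w'' t₁ = 1 := by simp [hw'', ht₁s]
    rw [h4, mul_one] at h2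
    linarith
  have hsum1 : hfn c + M'.reachVal w'' c ≤ 1 := by
    have hv : ∀ n, vseq M' ind n c + vseq M' w'' n c ≤ 1 := by
      intro n
      have : vseq M' ind n c + vseq M' w'' n c
          = ∑ t ∈ M'.T, (M'.P ^ n) c t * (ind t + w'' t) := by
        unfold vseq
        rw [← Finset.sum_add_distrib]
        apply Finset.sum_congr rfl
        intro t _
        ring
      rw [this]
      calc ∑ t ∈ M'.T, (M'.P ^ n) c t * (ind t + w'' t)
          = ∑ t ∈ M'.T, (M'.P ^ n) c t := by
            apply Finset.sum_congr rfl
            intro t _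
            by_cases h : t = s <;> simp [hind, hw'', h]
        _ ≤ ∑ t : S, (M'.P ^ n) c t :=
            Finset.sum_le_sum_of_subset_of_nonneg (Finset.subset_univ _)
              (fun b _ _ => M'.pow_nonneg n c b)
        _ = 1 := M'.pow_rowsum n c
    have hlim : Filter.Tendsto (fun n => vseq M' ind n c + vseq M' w'' n c)
        Filter.atTop (nhds (hfn c + M'.reachVal w'' c)) :=
      (vseq_tendsto M' hind0 c).add (vseq_tendsto M' hw''0 c)
    exact le_of_tendsto hlim (Filter.Eventually.of_forall hv)
  have hfc : hfn c < 1 := by linarith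
  have hqlt : q < 1 := by
    have h1 : q < ∑ b, M.δ s b := by
      rw [hq]
      apply Finset.sum_lt_sum
      · intro b _
        exact mul_le_of_le_one_right (M.nonneg s b) (hfn_le1 b)
      · refine ⟨c, Finset.mem_univ c, ?_⟩
        have hsc' : 0 < M.δ s c := hsc
        nlinarith [hfc, hsc', hfn_nonneg c]
    rwa [M.rowsum s] at h1
  -- γ' = V - q (V - γ)
  have hγ' : ∑ s' : S, M.δ s s' * M'.reachVal w' s' = V - q * (V - γ) := by
    have h1 : ∑ s' : S, M.δ s s' * M'.reachVal w' s'
        = ∑ s' : S, M.δ s s' * (M.reachVal w s' - hfn s' * (V - γ)) := by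
      apply Finset.sum_congr rfl
      intro b _
      rw [← hueq b, hu]
    rw [h1]
    have h2 : V = ∑ b, M.δ s b * M.reachVal w b := reachVal_bellman M hw s
    rw [hq, Finset.sum_mul]
    rw [show (∑ s' : S, M.δ s s' * (M.reachVal w s' - hfn s' * (V - γ)))
        = (∑ s' : S, M.δ s s' * M.reachVal w s')
          - ∑ s' : S, M.δ s s' * hfn s' * (V - γ) by
      rw [← Finset.sum_sub_distrib]
      apply Finset.sum_congr rfl
      intro b _
      ring]
    rw [← h2]
  rw [hγ']
  constructor
  · intro h
    by_contra h'
    push_neg at h'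
    have hVγ : V - γ ≤ 0 := by linarith
    nlinarith
  · intro h
    have : 0 < (1 - q) * (V - γ) := mul_pos (by linarith) (by linarith)
    nlinarith
end

section
/- Let M be a Markov chain with targets T and weight function w : T → [0,∞) in which every state can reach T along edges, let s ∉ T, and let γ ≥ 0. Let f : S → ℝ be any vector with f ≤ val_{M[s=γ]} pointwise, where val_{M[s=γ]} is the weighted reachability value vector of the reduced MC M[s = γ], and set γ' := ∑_{s'} δ(s,s') f(s'). If γ' > γ, then val_M(s) > γ, where val_M is the weighted reachability value vector of M. -/
variable {S : Type} [Fintype S] [DecidableEq S]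

open Filter Topology Finset

namespace MCAux

variable {S : Type} [Fintype S] [DecidableEq S]

lemma P_apply (M : MC S) (a b : S) : M.P a b = M.δ a b := rfl

lemma Pow_nonneg (M : MC S) : ∀ (n : ℕ) (a b : S), 0 ≤ (M.P ^ n) a b := by
  intro n
  induction n with
  | zero =>
    intro a b
    rw [pow_zero, Matrix.one_apply]
    split_ifs <;> norm_num
  | succ n ih =>
    intro a b
    rw [pow_succ, Matrix.mul_apply]
    exact Finset.sum_nonneg fun c _ => mul_nonneg (ih a c) (M.nonneg c b)

lemma Pow_rowsum (M : MC S) : ∀ (n : ℕ) (a : S), ∑ b, (M.P ^ n) a b = 1 := by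
  intro n
  induction n with
  | zero => intro a; simp [Matrix.one_apply]
  | succ n ih =>
    intro a
    simp only [pow_succ, Matrix.mul_apply]
    rw [Finset.sum_comm]
    have : ∀ c : S, ∑ b, (M.P ^ n) a c * M.P c b = (M.P ^ n) a c := by
      intro c
      rw [← Finset.mul_sum]
      have : ∑ b, M.P c b = 1 := M.rowsum c
      rw [this, mul_one]
    rw [Finset.sum_congr rfl fun c _ => this c]
    exact ih a

lemma Pow_le_one (M : MC S) (n : ℕ) (a b : S) : (M.P ^ n) a b ≤ 1 := by
  calc (M.P ^ n) a b ≤ ∑ c, (M.P ^ n) a c :=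
        Finset.single_le_sum (fun c _ => Pow_nonneg M n a c) (Finset.mem_univ b)
    _ = 1 := Pow_rowsum M n a

lemma delta_absorb (M : MC S) {t : S} (ht : t ∈ M.T) {b : S} (hb : b ≠ t) : M.δ t b = 0 := by
  have h1 := M.rowsum t
  have h2 := M.absorbing t ht
  have key : ∑ b ∈ Finset.univ.erase t, M.δ t b = 0 := by
    have := Finset.add_sum_erase Finset.univ (M.δ t) (Finset.mem_univ t)
    rw [h1] at this
    linarith
  have := (Finset.sum_eq_zero_iff_of_nonneg (fun c _ => M.nonneg t c)).mp key b
    (Finset.mem_erase.mpr ⟨hb, Finset.mem_univ b⟩)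
  exact this

lemma Pow_absorb (M : MC S) {t : S} (ht : t ∈ M.T) :
    ∀ (n : ℕ) (b : S), (M.P ^ n) t b = if b = t then 1 else 0 := by
  intro n
  induction n with
  | zero => intro b; rw [pow_zero, Matrix.one_apply]; simp [eq_comm]
  | succ n ih =>
    intro b
    rw [pow_succ', Matrix.mul_apply]
    rw [Finset.sum_eq_single t]
    · rw [P_apply, M.absorbing t ht, one_mul, ih b]
    · intro c _ hc
      rw [P_apply, delta_absorb M ht hc, zero_mul]
    · intro hc; exact absurd (Finset.mem_univ t) hc


lemma A_mono (M : MC S) (w : S → ℝ) (hw : ∀ t ∈ M.T, 0 ≤ w t) (a : S) :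
    Monotone fun n => ∑ t ∈ M.T, (M.P ^ n) a t * w t := by
  apply monotone_nat_of_le_succ
  intro n
  apply Finset.sum_le_sum
  intro t ht
  apply mul_le_mul_of_nonneg_right _ (hw t ht)
  calc (M.P ^ n) a t = (M.P ^ n) a t * M.P t t := by
        rw [P_apply, M.absorbing t ht, mul_one]
    _ ≤ ∑ c, (M.P ^ n) a c * M.P c t :=
        Finset.single_le_sum (fun c _ => mul_nonneg (Pow_nonneg M n a c) (M.nonneg c t))
          (Finset.mem_univ t)
    _ = (M.P ^ (n+1)) a t := by rw [pow_succ, Matrix.mul_apply]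

lemma A_bdd (M : MC S) (w : S → ℝ) (hw : ∀ t ∈ M.T, 0 ≤ w t) (a : S) (n : ℕ) :
    ∑ t ∈ M.T, (M.P ^ n) a t * w t ≤ ∑ t ∈ M.T, w t := by
  apply Finset.sum_le_sum
  intro t ht
  calc (M.P ^ n) a t * w t ≤ 1 * w t :=
        mul_le_mul_of_nonneg_right (Pow_le_one M n a t) (hw t ht)
    _ = w t := one_mul _

lemma tendstoA (M : MC S) (w : S → ℝ) (hw : ∀ t ∈ M.T, 0 ≤ w t) (a : S) :
    Tendsto (fun n => ∑ t ∈ M.T, (M.P ^ n) a t * w t) atTop (𝓝 (M.reachVal w a)) := by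
  apply tendsto_atTop_ciSup (A_mono M w hw a)
  exact ⟨∑ t ∈ M.T, w t, by rintro x ⟨n, rfl⟩; exact A_bdd M w hw a n⟩

lemma A_le_reachVal (M : MC S) (w : S → ℝ) (hw : ∀ t ∈ M.T, 0 ≤ w t) (a : S) (n : ℕ) :
    ∑ t ∈ M.T, (M.P ^ n) a t * w t ≤ M.reachVal w a :=
  le_ciSup ⟨∑ t ∈ M.T, w t, by rintro x ⟨m, rfl⟩; exact A_bdd M w hw a m⟩ n

lemma reachVal_target (M : MC S) (w : S → ℝ) {t : S} (ht : t ∈ M.T) :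
    M.reachVal w t = w t := by
  have : ∀ n : ℕ, ∑ t' ∈ M.T, (M.P ^ n) t t' * w t' = w t := by
    intro n
    rw [Finset.sum_eq_single t]
    · rw [Pow_absorb M ht n t, if_pos rfl, one_mul]
    · intro c _ hc; rw [Pow_absorb M ht n c, if_neg hc, zero_mul]
    · intro hc; exact absurd ht hc
  unfold MC.reachVal
  simp only [this]
  exact ciSup_const

lemma reachVal_step (M : MC S) (w : S → ℝ) (hw : ∀ t ∈ M.T, 0 ≤ w t) (a : S) :
    M.reachVal w a = ∑ b, M.δ a b * M.reachVal w b := by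
  have h1 : Tendsto (fun n => ∑ t ∈ M.T, (M.P ^ (n+1)) a t * w t) atTop
      (𝓝 (M.reachVal w a)) := (tendstoA M w hw a).comp (tendsto_add_atTop_nat 1)
  have h2 : ∀ n : ℕ, ∑ t ∈ M.T, (M.P ^ (n+1)) a t * w t
      = ∑ b, M.δ a b * ∑ t ∈ M.T, (M.P ^ n) b t * w t := by
    intro n
    simp only [pow_succ', Matrix.mul_apply, Finset.sum_mul, Finset.mul_sum]
    rw [Finset.sum_comm]
    apply Finset.sum_congr rfl
    intro b _
    apply Finset.sum_congr rfl
    intro t _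
    rw [P_apply]; ring
  simp only [h2] at h1
  have h3 : Tendsto (fun n => ∑ b, M.δ a b * ∑ t ∈ M.T, (M.P ^ n) b t * w t) atTop
      (𝓝 (∑ b, M.δ a b * M.reachVal w b)) :=
    tendsto_finset_sum _ fun b _ => (tendstoA M w hw b).const_mul _
  exact tendsto_nhds_unique h1 h3

lemma pathLen_pos (M : MC S) : ∀ (n : ℕ) (a b : S), pathLen M.edge n a b → 0 < (M.P ^ n) a b := by
  intro n
  induction n with
  | zero =>
    intro a b hab
    cases hab
    rw [pow_zero, Matrix.one_apply_eq]; norm_num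
  | succ n ih =>
    intro a b hab
    obtain ⟨c, hac, hcb⟩ := hab
    rw [pow_succ', Matrix.mul_apply]
    have hpos : 0 < M.P a c * (M.P ^ n) c b := mul_pos hac (ih c b hcb)
    exact lt_of_lt_of_le hpos
      (Finset.single_le_sum
        (fun d _ => mul_nonneg (M.nonneg a d) (Pow_nonneg M n d b)) (Finset.mem_univ c))


/-- probability mass outside T after n steps -/
noncomputable def u (M : MC S) (n : ℕ) (b : S) : ℝ :=
  ∑ c ∈ Finset.univ.filter (fun c => c ∉ M.T), (M.P ^ n) b c

lemma u_nonneg (M : MC S) (n : ℕ) (b : S) : 0 ≤ u M n b :=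
  Finset.sum_nonneg fun c _ => Pow_nonneg M n b c

lemma u_le_one (M : MC S) (n : ℕ) (b : S) : u M n b ≤ 1 := by
  calc u M n b ≤ ∑ c, (M.P ^ n) b c :=
        Finset.sum_le_sum_of_subset_of_nonneg (Finset.filter_subset _ _)
          (fun c _ _ => Pow_nonneg M n b c)
    _ = 1 := Pow_rowsum M n b

lemma u_target (M : MC S) (n : ℕ) {t : S} (ht : t ∈ M.T) : u M n t = 0 := by
  apply Finset.sum_eq_zero
  intro c hc
  rw [Finset.mem_filter] at hc
  rw [Pow_absorb M ht n c, if_neg]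
  intro e; exact hc.2 (e ▸ ht)

lemma u_comp (M : MC S) (m n : ℕ) (b : S) :
    u M (m + n) b = ∑ c, (M.P ^ m) b c * u M n c := by
  unfold u
  simp only [pow_add, Matrix.mul_apply, Finset.mul_sum]
  rw [Finset.sum_comm]

lemma u_plus_le (M : MC S) (m n : ℕ) (b : S) {q : ℝ} (hq : ∀ c, u M n c ≤ q) :
    u M (m + n) b ≤ q * u M m b := by
  rw [u_comp]
  have hsplit : ∑ c, (M.P ^ m) b c * u M n c
      = ∑ c ∈ Finset.univ.filter (fun c => c ∉ M.T), (M.P ^ m) b c * u M n c := by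
    rw [eq_comm]
    apply Finset.sum_filter_of_ne
    intro c _ hne
    by_contra hmem
    rw [u_target M n hmem, mul_zero] at hne
    exact hne rfl
  rw [hsplit]
  calc ∑ c ∈ Finset.univ.filter (fun c => c ∉ M.T), (M.P ^ m) b c * u M n c
      ≤ ∑ c ∈ Finset.univ.filter (fun c => c ∉ M.T), (M.P ^ m) b c * q :=
        Finset.sum_le_sum fun c _ =>
          mul_le_mul_of_nonneg_left (hq c) (Pow_nonneg M m b c)
    _ = q * u M m b := by rw [← Finset.sum_mul]; unfold u; ring

lemma u_anti (M : MC S) (b : S) : Antitone fun n => u M n b := by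
  apply antitone_nat_of_succ_le
  intro n
  have : u M (n + 1) b ≤ 1 * u M n b :=
    u_plus_le M n 1 b (fun c => u_le_one M 1 c)
  linarith

lemma u_lt_one (M : MC S)
    {N : ℕ} (hN : ∀ a : S, ∃ n ≤ N, ∃ t ∈ M.T, pathLen M.edge n a t) (b : S) :
    u M N b < 1 := by
  obtain ⟨n, hnN, t, ht, hp⟩ := hN b
  have h1 : u M N b ≤ u M n b := u_anti M b hnN
  have hpos : 0 < (M.P ^ n) b t := pathLen_pos M n b t hp
  have h2 : u M n b + ∑ t' ∈ M.T, (M.P ^ n) b t' = 1 := by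
    rw [← Pow_rowsum M n b]
    rw [← Finset.sum_filter_add_sum_filter_not Finset.univ (fun c => c ∉ M.T)
      (fun c => (M.P ^ n) b c)]
    congr 1
    apply Finset.sum_congr _ (fun _ _ => rfl)
    ext c; simp
  have h3 : (M.P ^ n) b t ≤ ∑ t' ∈ M.T, (M.P ^ n) b t' :=
    Finset.single_le_sum (fun c _ => Pow_nonneg M n b c) ht
  linarith

lemma verify (M : MC S) [Nonempty S] (hreach : ∀ a : S, reaches M.edge (M.T : Set S) a)
    (w : S → ℝ) (hw : ∀ t ∈ M.T, 0 ≤ w t) (g : S → ℝ)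
    (hgT : ∀ t ∈ M.T, g t ≤ w t)
    (hgB : ∀ a ∉ M.T, g a ≤ ∑ b, M.δ a b * g b) (a : S) :
    g a ≤ M.reachVal w a := by
  classical
  set G : S → ℝ := fun c => if c ∈ M.T then w c else g c with hG
  have hgG : ∀ c, g c ≤ G c := by
    intro c
    by_cases hc : c ∈ M.T
    · simp only [hG, if_pos hc]; exact hgT c hc
    · simp only [hG, if_neg hc]; exact le_refl _
  have hGB : ∀ c, G c ≤ ∑ b, M.δ c b * G b := by
    intro c
    by_cases hc : c ∈ M.T
    · have : ∑ b, M.δ c b * G b = G c := by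
        rw [Finset.sum_eq_single c]
        · rw [M.absorbing c hc, one_mul]
        · intro b _ hb; rw [delta_absorb M hc hb, zero_mul]
        · intro hb; exact absurd (Finset.mem_univ c) hb
      rw [this]
    · simp only [hG, if_neg hc]
      calc g c ≤ ∑ b, M.δ c b * g b := hgB c hc
        _ ≤ ∑ b, M.δ c b * G b :=
            Finset.sum_le_sum fun b _ => mul_le_mul_of_nonneg_left (hgG b) (M.nonneg c b)
  have hGn : ∀ (n : ℕ) (c : S), G c ≤ ∑ b, (M.P ^ n) c b * G b := by
    intro n
    induction n with
    | zero =>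
      intro c
      rw [pow_zero]
      simp [Matrix.one_apply]
    | succ n ih =>
      intro c
      calc G c ≤ ∑ b, (M.P ^ n) c b * G b := ih c
        _ ≤ ∑ b, (M.P ^ n) c b * (∑ d, M.δ b d * G d) :=
            Finset.sum_le_sum fun b _ =>
              mul_le_mul_of_nonneg_left (hGB b) (Pow_nonneg M n c b)
        _ = ∑ d, (M.P ^ (n+1)) c d * G d := by
            simp only [pow_succ, Matrix.mul_apply, Finset.mul_sum, Finset.sum_mul]
            rw [Finset.sum_comm]
            apply Finset.sum_congr rfl; intro b _
            apply Finset.sum_congr rfl; intro d _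
            rw [P_apply]; ring
  -- constant bound on |g| hence on G off T
  set C : ℝ := Finset.univ.sup' Finset.univ_nonempty (fun c => |g c|) with hC
  have hC0 : 0 ≤ C := by
    have := Finset.le_sup' (fun c => |g c|) (Finset.mem_univ (Classical.arbitrary S))
    exact le_trans (abs_nonneg _) this
  have hCg : ∀ c, g c ≤ C := fun c =>
    le_trans (le_abs_self _) (Finset.le_sup' (fun c => |g c|) (Finset.mem_univ c))
  -- main inequality for each n
  have hmain : ∀ n : ℕ, g a ≤ M.reachVal w a + C * u M n a := by
    intro n
    have hsplit : ∑ b, (M.P ^ n) a b * G b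
        = (∑ t ∈ M.T, (M.P ^ n) a t * w t)
          + ∑ b ∈ Finset.univ.filter (fun c => c ∉ M.T), (M.P ^ n) a b * g b := by
      rw [← Finset.sum_filter_add_sum_filter_not Finset.univ (fun c => c ∈ M.T)
        (fun b => (M.P ^ n) a b * G b)]
      congr 1
      · apply Finset.sum_congr (by ext c; simp)
        intro b hb
        simp only [hG, if_pos hb]
      · apply Finset.sum_congr (by ext c; simp)
        intro b hb
        rw [Finset.mem_filter] at hb
        simp only [hG, if_neg hb.2]
    have h2 : ∑ b ∈ Finset.univ.filter (fun c => c ∉ M.T), (M.P ^ n) a b * g b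
        ≤ C * u M n a := by
      calc ∑ b ∈ Finset.univ.filter (fun c => c ∉ M.T), (M.P ^ n) a b * g b
          ≤ ∑ b ∈ Finset.univ.filter (fun c => c ∉ M.T), (M.P ^ n) a b * C :=
            Finset.sum_le_sum fun b _ =>
              mul_le_mul_of_nonneg_left (hCg b) (Pow_nonneg M n a b)
        _ = C * u M n a := by rw [← Finset.sum_mul]; unfold u; ring
    calc g a ≤ G a := hgG a
      _ ≤ ∑ b, (M.P ^ n) a b * G b := hGn n a
      _ = (∑ t ∈ M.T, (M.P ^ n) a t * w t)
          + ∑ b ∈ Finset.univ.filter (fun c => c ∉ M.T), (M.P ^ n) a b * g b := hsplit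
      _ ≤ M.reachVal w a + C * u M n a :=
          add_le_add (A_le_reachVal M w hw a n) h2
  -- construct N and q
  have hch : ∀ b : S, ∃ n, ∃ t ∈ M.T, pathLen M.edge n b t := by
    intro b
    obtain ⟨n, t, ht, hp⟩ := hreach b
    exact ⟨n, t, ht, hp⟩
  choose nf tf htf hpf using hch
  set N : ℕ := Finset.univ.sup nf with hN
  have hNlt : ∀ b : S, u M N b < 1 := by
    apply u_lt_one M
    intro b
    exact ⟨nf b, Finset.le_sup (Finset.mem_univ b), tf b, htf b, hpf b⟩
  set q : ℝ := Finset.univ.sup' Finset.univ_nonempty (fun b => u M N b) with hq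
  have hq1 : q < 1 := by
    rw [hq, Finset.sup'_lt_iff]
    intro b _; exact hNlt b
  have hq0 : 0 ≤ q := le_trans (u_nonneg M N (Classical.arbitrary S))
    (Finset.le_sup' _ (Finset.mem_univ _))
  have hqub : ∀ c, u M N c ≤ q := fun c => Finset.le_sup' _ (Finset.mem_univ c)
  have hukN : ∀ k : ℕ, u M (k * N) a ≤ q ^ k := by
    intro k
    induction k with
    | zero => simpa using u_le_one M 0 a
    | succ k ih =>
      have : u M (k * N + N) a ≤ q * u M (k * N) a := u_plus_le M (k * N) N a hqub
      calc u M ((k+1) * N) a = u M (k * N + N) a := by ring_nf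
        _ ≤ q * u M (k * N) a := this
        _ ≤ q * q ^ k := mul_le_mul_of_nonneg_left ih hq0
        _ = q ^ (k + 1) := by ring
  -- pass to the limit
  have htend : Tendsto (fun k : ℕ => M.reachVal w a + C * q ^ k) atTop
      (𝓝 (M.reachVal w a + C * 0)) :=
    tendsto_const_nhds.add (tendsto_const_nhds.mul
      (tendsto_pow_atTop_nhds_zero_of_lt_one hq0 hq1))
  have hle : ∀ k : ℕ, g a ≤ M.reachVal w a + C * q ^ k := by
    intro k
    calc g a ≤ M.reachVal w a + C * u M (k * N) a := hmain (k * N)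
      _ ≤ M.reachVal w a + C * q ^ k := by
          have := mul_le_mul_of_nonneg_left (hukN k) hC0
          linarith
  have := ge_of_tendsto' htend hle
  linarith

end MCAux

/-- Verification of a guess as a lower bound: if `f` is a pointwise
lower bound on the weighted reachability value vector of the reduced Markov chain
`M[s = γ]` and `γ' = ∑_{s'} δ(s,s')·f(s') > γ`, then `val_M(s) > γ`. -/
theorem stmt_4 {S : Type} [Fintype S] [DecidableEq S] [Nonempty S]
    (M : MC S) (hreach : ∀ a : S, reaches M.edge (M.T : Set S) a)
    (w : S → ℝ) (hw : ∀ t ∈ M.T, 0 ≤ w t)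
    (s : S) (hs : s ∉ M.T) (γ : ℝ) (hγ : 0 ≤ γ)
    (f : S → ℝ)
    (hf : ∀ a : S, f a ≤ (M.reduce s).reachVal (Function.update w s γ) a)
    (h : γ < ∑ s' : S, M.δ s s' * f s') :
    γ < M.reachVal w s := by
  classical
  set w' : S → ℝ := Function.update w s γ with hw'def
  set v' : S → ℝ := (M.reduce s).reachVal w' with hv'def
  set γ' : ℝ := ∑ s' : S, M.δ s s' * f s' with hγ'def
  set g : S → ℝ := Function.update v' s γ' with hgdef
  have hw' : ∀ t ∈ (M.reduce s).T, 0 ≤ w' t := by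
    intro t ht
    by_cases hts : t = s
    · subst hts; rw [hw'def, Function.update_self]; exact hγ
    · rw [hw'def, Function.update_of_ne hts]
      rcases Finset.mem_insert.mp ht with h' | h'
      · exact absurd h' hts
      · exact hw t h'
  have hvs : v' s = γ := by
    rw [hv'def, MCAux.reachVal_target (M.reduce s) w' (Finset.mem_insert_self s M.T),
      hw'def, Function.update_self]
  have hgs : g s = γ' := by rw [hgdef, Function.update_self]
  have hγγ' : γ < γ' := h
  have hfg : ∀ b, f b ≤ g b := by
    intro b
    by_cases hb : b = s
    · subst hb
      rw [hgs]
      calc f b ≤ v' b := hf b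
        _ = γ := hvs
        _ ≤ γ' := le_of_lt hγγ'
    · rw [hgdef, Function.update_of_ne hb]; exact hf b
  have hvg : ∀ b, v' b ≤ g b := by
    intro b
    by_cases hb : b = s
    · subst hb; rw [hgs, hvs]; exact le_of_lt hγγ'
    · rw [hgdef, Function.update_of_ne hb]
  have hgT : ∀ t ∈ M.T, g t ≤ w t := by
    intro t ht
    have hts : t ≠ s := fun e => hs (e ▸ ht)
    rw [hgdef, Function.update_of_ne hts, hv'def,
      MCAux.reachVal_target (M.reduce s) w' (Finset.mem_insert_of_mem ht),
      hw'def, Function.update_of_ne hts]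
  have hgB : ∀ a ∉ M.T, g a ≤ ∑ b, M.δ a b * g b := by
    intro a ha
    by_cases has : a = s
    · subst has
      rw [hgs, hγ'def]
      exact Finset.sum_le_sum fun b _ =>
        mul_le_mul_of_nonneg_left (hfg b) (M.nonneg a b)
    · rw [hgdef, Function.update_of_ne has]
      have haT' : a ∉ (M.reduce s).T := by
        intro hmem
        rcases Finset.mem_insert.mp hmem with h' | h'
        · exact has h'
        · exact ha h'
      have hstep := MCAux.reachVal_step (M.reduce s) w' hw' a
      have hδ : ∀ b, (M.reduce s).δ a b = M.δ a b := by
        intro b; simp [MC.reduce, has]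
      calc v' a = ∑ b, (M.reduce s).δ a b * v' b := hstep
        _ = ∑ b, M.δ a b * v' b := Finset.sum_congr rfl fun b _ => by rw [hδ b]
        _ ≤ ∑ b, M.δ a b * g b :=
            Finset.sum_le_sum fun b _ =>
              mul_le_mul_of_nonneg_left (hvg b) (M.nonneg a b)
  have hverify := MCAux.verify M hreach w hw g hgT hgB s
  calc γ < γ' := hγγ'
    _ = g s := hgs.symm
    _ ≤ M.reachVal w s := hverify
end

section
/- Let M be a Markov chain with targets T and weight function w : T → [0,∞) in which every state can reach T along edges, let s ∉ T, and let γ ≥ 0. Let f : S → ℝ be any vector with f ≥ val_{M[s=γ]} pointwise, where val_{M[s=γ]} is the weighted reachability value vector of the reduced MC M[s = γ], and set γ' := ∑_{s'} δ(s,s') f(s'). If γ' < γ, then val_M(s) < γ, where val_M is the weighted reachability value vector of M. -/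
variable {S : Type} [Fintype S] [DecidableEq S]

section Aux

namespace MC

/-- Value iteration: probability-weighted target values after `n` steps. -/
noncomputable def vIter (M : MC S) (w : S → ℝ) (n : ℕ) (a : S) : ℝ :=
  ∑ t ∈ M.T, (M.P ^ n) a t * w t

lemma P_apply_s5 (M : MC S) (a b : S) : M.P a b = M.δ a b := rfl

lemma Pn_nonneg_s5 (M : MC S) : ∀ (n : ℕ) (a b : S), 0 ≤ (M.P ^ n) a b := by
  intro n
  induction n with
  | zero =>
    intro a b
    simp only [pow_zero, Matrix.one_apply]
    split <;> norm_num
  | succ n ih =>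
    intro a b
    rw [pow_succ, Matrix.mul_apply]
    exact Finset.sum_nonneg fun c _ => mul_nonneg (ih a c) (M.nonneg c b)

lemma Pn_rowsum_s5 (M : MC S) : ∀ (n : ℕ) (a : S), ∑ b : S, (M.P ^ n) a b = 1 := by
  intro n
  induction n with
  | zero => intro a; simp [Matrix.one_apply]
  | succ n ih =>
    intro a
    simp only [pow_succ', Matrix.mul_apply]
    rw [Finset.sum_comm]
    simp only [← Finset.mul_sum]
    simp only [ih]
    simpa [M.P_apply_s5] using M.rowsum a

lemma Pn_le_one (M : MC S) (n : ℕ) (a b : S) : (M.P ^ n) a b ≤ 1 := by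
  have h := M.Pn_rowsum_s5 n a
  calc (M.P ^ n) a b ≤ ∑ b' : S, (M.P ^ n) a b' :=
        Finset.single_le_sum (f := fun b' => (M.P ^ n) a b')
          (fun c _ => M.Pn_nonneg_s5 n a c) (Finset.mem_univ b)
    _ = 1 := h

lemma vIter_succ (M : MC S) (w : S → ℝ) (n : ℕ) (a : S) :
    M.vIter w (n + 1) a = ∑ b : S, M.δ a b * M.vIter w n b := by
  unfold vIter
  simp only [pow_succ', Matrix.mul_apply, Finset.sum_mul, Finset.mul_sum]
  rw [Finset.sum_comm]
  exact Finset.sum_congr rfl fun b _ => Finset.sum_congr rfl fun t _ => by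
    rw [M.P_apply_s5, mul_assoc]

lemma vIter_zero (M : MC S) (w : S → ℝ) (a : S) :
    M.vIter w 0 a = if a ∈ M.T then w a else 0 := by
  unfold vIter
  simp only [pow_zero, Matrix.one_apply]
  simp only [ite_mul, one_mul, zero_mul]
  exact Finset.sum_ite_eq M.T a w

lemma vIter_nonneg (M : MC S) {w : S → ℝ} (hw : ∀ t ∈ M.T, 0 ≤ w t) (n : ℕ) (a : S) :
    0 ≤ M.vIter w n a :=
  Finset.sum_nonneg fun t ht => mul_nonneg (M.Pn_nonneg_s5 n a t) (hw t ht)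

lemma vIter_le (M : MC S) {w : S → ℝ} (hw : ∀ t ∈ M.T, 0 ≤ w t) (n : ℕ) (a : S) :
    M.vIter w n a ≤ ∑ t ∈ M.T, w t :=
  Finset.sum_le_sum fun t ht => mul_le_of_le_one_left (hw t ht) (M.Pn_le_one n a t)

lemma vIter_mono (M : MC S) {w : S → ℝ} (hw : ∀ t ∈ M.T, 0 ≤ w t) (a : S) :
    Monotone (fun n => M.vIter w n a) := by
  apply monotone_nat_of_le_succ
  intro n
  apply Finset.sum_le_sum
  intro t ht
  apply mul_le_mul_of_nonneg_right _ (hw t ht)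
  calc (M.P ^ n) a t = (M.P ^ n) a t * M.P t t := by
        rw [M.P_apply_s5, M.absorbing t ht, mul_one]
    _ ≤ ∑ c : S, (M.P ^ n) a c * M.P c t :=
        Finset.single_le_sum (f := fun c => (M.P ^ n) a c * M.P c t)
          (fun c _ => mul_nonneg (M.Pn_nonneg_s5 n a c) (M.nonneg c t)) (Finset.mem_univ t)
    _ = (M.P ^ (n + 1)) a t := by rw [pow_succ, Matrix.mul_apply]

lemma vIter_bddAbove (M : MC S) {w : S → ℝ} (hw : ∀ t ∈ M.T, 0 ≤ w t) (a : S) :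
    BddAbove (Set.range fun n => M.vIter w n a) := by
  refine ⟨∑ t ∈ M.T, w t, ?_⟩
  rintro x ⟨n, rfl⟩
  exact M.vIter_le hw n a

lemma reachVal_eq (M : MC S) (w : S → ℝ) (a : S) :
    M.reachVal w a = ⨆ n : ℕ, M.vIter w n a := rfl

lemma vIter_le_reachVal (M : MC S) {w : S → ℝ} (hw : ∀ t ∈ M.T, 0 ≤ w t) (n : ℕ) (a : S) :
    M.vIter w n a ≤ M.reachVal w a :=
  le_ciSup (M.vIter_bddAbove hw a) n

lemma reachVal_nonneg (M : MC S) {w : S → ℝ} (hw : ∀ t ∈ M.T, 0 ≤ w t) (a : S) :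
    0 ≤ M.reachVal w a :=
  (M.vIter_nonneg hw 0 a).trans (M.vIter_le_reachVal hw 0 a)

lemma reachVal_target (M : MC S) {w : S → ℝ} (hw : ∀ t ∈ M.T, 0 ≤ w t) {t : S}
    (ht : t ∈ M.T) : w t ≤ M.reachVal w t := by
  have h0 : M.vIter w 0 t = w t := by rw [M.vIter_zero]; simp [ht]
  calc w t = M.vIter w 0 t := h0.symm
    _ ≤ M.reachVal w t := M.vIter_le_reachVal hw 0 t

lemma superharmonic (M : MC S) {w : S → ℝ} (hw : ∀ t ∈ M.T, 0 ≤ w t) (a : S) :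
    ∑ b : S, M.δ a b * M.reachVal w b ≤ M.reachVal w a := by
  have htend : ∀ b : S, Filter.Tendsto (fun n => M.vIter w n b) Filter.atTop
      (nhds (M.reachVal w b)) := fun b =>
    tendsto_atTop_ciSup (M.vIter_mono hw b) (M.vIter_bddAbove hw b)
  have hsum : Filter.Tendsto (fun n => ∑ b : S, M.δ a b * M.vIter w n b) Filter.atTop
      (nhds (∑ b : S, M.δ a b * M.reachVal w b)) :=
    tendsto_finset_sum _ fun b _ => (htend b).const_mul (M.δ a b)
  refine le_of_tendsto hsum (Filter.Eventually.of_forall fun n => ?_)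
  rw [← M.vIter_succ]
  exact M.vIter_le_reachVal hw (n + 1) a

lemma reduce_pow_apply (M : MC S) (s : S) :
    ∀ (n : ℕ) (b : S), ((M.reduce s).P ^ n) s b = if b = s then 1 else 0 := by
  intro n
  induction n with
  | zero =>
    intro b
    simp only [pow_zero, Matrix.one_apply]
    by_cases hb : b = s
    · simp [hb]
    · rw [if_neg (fun hc => hb hc.symm), if_neg hb]
  | succ n ih =>
    intro b
    rw [pow_succ', Matrix.mul_apply]
    have hδ : ∀ c : S, (M.reduce s).P s c = if c = s then 1 else 0 := by
      intro c; simp [MC.P, MC.reduce]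
    rw [Finset.sum_congr rfl (fun c _ => by rw [hδ c])]
    simp only [ite_mul, one_mul, zero_mul]
    rw [Finset.sum_ite_eq' Finset.univ s (fun c => ((M.reduce s).P ^ n) c b)]
    simp [ih b]

lemma reachVal_reduce_self (M : MC S) (s : S) (w : S → ℝ) (γ : ℝ) :
    (M.reduce s).reachVal (Function.update w s γ) s = γ := by
  have hv : ∀ n : ℕ, (M.reduce s).vIter (Function.update w s γ) n s = γ := by
    intro n
    unfold vIter
    rw [Finset.sum_congr rfl (fun t _ => by rw [M.reduce_pow_apply s n t])]
    simp only [ite_mul, one_mul, zero_mul]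
    rw [Finset.sum_ite_eq' (M.reduce s).T s (Function.update w s γ)]
    simp [MC.reduce]
  rw [reachVal_eq]
  simp only [hv]
  exact ciSup_const

end MC

end Aux

/-- Verification of a guess as an upper bound: if `f` is a pointwise
upper bound on the weighted reachability value vector of the reduced Markov chain
`M[s = γ]` and `γ' = ∑_{s'} δ(s,s')·f(s') < γ`, then `val_M(s) < γ`. -/
theorem stmt_5 {S : Type} [Fintype S] [DecidableEq S] [Nonempty S]
    (M : MC S) (hreach : ∀ a : S, reaches M.edge (M.T : Set S) a)
    (w : S → ℝ) (hw : ∀ t ∈ M.T, 0 ≤ w t)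
    (s : S) (hs : s ∉ M.T) (γ : ℝ) (hγ : 0 ≤ γ)
    (f : S → ℝ)
    (hf : ∀ a : S, (M.reduce s).reachVal (Function.update w s γ) a ≤ f a)
    (h : ∑ s' : S, M.δ s s' * f s' < γ) :
    M.reachVal w s < γ := by
  set N := M.reduce s with hN
  set w' := Function.update w s γ with hw'
  have hw'pos : ∀ t ∈ N.T, 0 ≤ w' t := by
    intro t ht
    by_cases hts : t = s
    · subst hts; simp [hw', Function.update_self, hγ]
    · rcases Finset.mem_insert.mp ht with h' | h'
      · exact absurd h' hts
      · rw [hw', Function.update_of_ne hts]; exact hw t h'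
  have hgnn : ∀ a : S, 0 ≤ N.reachVal w' a := N.reachVal_nonneg hw'pos
  have hvalN_s : N.reachVal w' s = γ := M.reachVal_reduce_self s w γ
  -- key: M's value iterates are bounded by the reduced chain's value
  have key : ∀ (n : ℕ) (a : S), M.vIter w n a ≤ N.reachVal w' a := by
    intro n
    induction n with
    | zero =>
      intro a
      rw [M.vIter_zero]
      by_cases ha : a ∈ M.T
      · have has : a ≠ s := fun hc => hs (hc ▸ ha)
        have haT' : a ∈ N.T := Finset.mem_insert_of_mem ha
        have := N.reachVal_target hw'pos haT'
        simpa [ha, hw', Function.update_of_ne has] using this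
      · simp [ha, hgnn a]
    | succ n ih =>
      intro a
      rw [M.vIter_succ]
      by_cases ha : a = s
      · rw [ha]
        calc ∑ b : S, M.δ s b * M.vIter w n b
            ≤ ∑ b : S, M.δ s b * f b := by
              refine Finset.sum_le_sum fun b _ => mul_le_mul_of_nonneg_left ?_ (M.nonneg s b)
              exact (ih b).trans (hf b)
          _ ≤ γ := h.le
          _ = N.reachVal w' s := hvalN_s.symm
      · calc ∑ b : S, M.δ a b * M.vIter w n b
            ≤ ∑ b : S, M.δ a b * N.reachVal w' b :=
              Finset.sum_le_sum fun b _ => mul_le_mul_of_nonneg_left (ih b) (M.nonneg a b)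
          _ = ∑ b : S, N.δ a b * N.reachVal w' b := by
              refine Finset.sum_congr rfl fun b _ => ?_
              simp [hN, MC.reduce, ha]
          _ ≤ N.reachVal w' a := N.superharmonic hw'pos a
  -- each iterate at s is at most γ' < γ
  have hγ' : ∀ n : ℕ, M.vIter w n s ≤ ∑ s' : S, M.δ s s' * f s' := by
    intro n
    cases n with
    | zero =>
      rw [M.vIter_zero]
      simp only [hs, if_false]
      exact Finset.sum_nonneg fun b _ =>
        mul_nonneg (M.nonneg s b) ((hgnn b).trans (hf b))
    | succ n =>
      rw [M.vIter_succ]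
      refine Finset.sum_le_sum fun b _ => mul_le_mul_of_nonneg_left ?_ (M.nonneg s b)
      exact (key n b).trans (hf b)
  calc M.reachVal w s = ⨆ n : ℕ, M.vIter w n s := M.reachVal_eq w s
    _ ≤ ∑ s' : S, M.δ s s' * f s' := ciSup_le hγ'
    _ < γ := h
end
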